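/- arXiv:0912.5119 — 8 statements merged into one kernel-verified Lean document; each statement's English description precedes it below -/
import Mathlib

section
/- Let n ≥ 0 and r ≥ 1 be integers, let q be real with 0 < q < 1, and let x be a real number. Then for every real z with 0 ≤ z < 1 the series Σ_{(m_1,…,m_r)∈ℕ^r} (-1)^{m_1+⋯+m_r} z^{m_1+⋯+m_r} [m_1+⋯+m_r+x]_q^n and Σ_{m=0}^∞ C(m+r-1, m) (-z)^m [m+x]_q^n converge absolutely and are equal; moreover, as z → 1⁻, 2^r times their common value converges to the r-th order q-Euler polynomial E_{n,q}^{(r)}(x) = (2^r/(1-q)^n) Σ_{l=0}^n C(n,l) (-1)^l q^{l x} / (1+q^l)^r. -/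
open Finset Filter

/-- The `q`-analogue `[y]_q = (1 - q^y)/(1 - q)` (real power). -/
noncomputable def qnum (q y : ℝ) : ℝ := (1 - q ^ y) / (1 - q)

/-- geometric series over `Fin r → ℕ` -/
lemma aux_geomPi : ∀ (r : ℕ) (t : ℝ), |t| < 1 →
    HasSum (fun m : Fin r → ℕ => t ^ (∑ i, m i)) ((1 - t)⁻¹ ^ r) := by
  intro r
  induction r with
  | zero =>
    intro t ht
    simpa using hasSum_fintype (fun m : Fin 0 → ℕ => t ^ (∑ i, m i))
  | succ r ih =>
    intro t ht
    have hgeo : HasSum (fun m : ℕ => t ^ m) (1 - t)⁻¹ := by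
      simpa using hasSum_geometric_of_norm_lt_one (ξ := t) (by simpa using ht)
    have h1 : Summable (fun m : ℕ => ‖t ^ m‖) := by
      simpa [norm_pow] using
        (hasSum_geometric_of_norm_lt_one (ξ := ‖t‖) (by simpa using ht)).summable
    have h2 : Summable (fun m : Fin r → ℕ => ‖t ^ (∑ i, m i)‖) := by
      simpa [norm_pow] using (ih ‖t‖ (by simpa using ht)).summable
    have habs : Summable (fun p : ℕ × (Fin r → ℕ) => t ^ p.1 * t ^ (∑ i, p.2 i)) :=
      summable_mul_of_summable_norm (f := fun m : ℕ => t ^ m)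
        (g := fun m : Fin r → ℕ => t ^ (∑ i, m i)) h1 h2
    have hmul : HasSum (fun p : ℕ × (Fin r → ℕ) => t ^ p.1 * t ^ (∑ i, p.2 i))
        ((1 - t)⁻¹ * (1 - t)⁻¹ ^ r) :=
      HasSum.mul (f := fun m : ℕ => t ^ m)
        (g := fun m : Fin r → ℕ => t ^ (∑ i, m i)) hgeo (ih t ht) habs
    have h5 := ((Fin.consEquiv (fun _ : Fin (r + 1) => ℕ)).symm.hasSum_iff).mpr hmul
    have heq : ((fun p : ℕ × (Fin r → ℕ) => t ^ p.1 * t ^ (∑ i, p.2 i))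
          ∘ (Fin.consEquiv (fun _ : Fin (r + 1) => ℕ)).symm)
        = fun m : Fin (r + 1) → ℕ => t ^ (∑ i, m i) := by
      funext m
      rw [Function.comp_apply, ← pow_add]
      congr 1
      simp [Fin.consEquiv, Fin.sum_univ_succ, Fin.tail]
    rw [heq] at h5
    rw [pow_succ']
    exact h5

lemma aux_rpow {q : ℝ} (hq0 : 0 < q) (x : ℝ) (S l : ℕ) :
    (q ^ ((S : ℝ) + x)) ^ l = q ^ ((l : ℝ) * x) * (q ^ l) ^ S := by
  have h1 : ((S:ℝ) + x) * (l:ℝ) = ((S * l : ℕ) : ℝ) + (l:ℝ) * x := by push_cast; ring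
  calc (q ^ ((S:ℝ) + x)) ^ l
      = q ^ (((S:ℝ) + x) * (l:ℝ)) := by
        rw [← Real.rpow_natCast (q ^ ((S:ℝ)+x)) l, ← Real.rpow_mul hq0.le]
    _ = q ^ (((S * l : ℕ) : ℝ) + (l:ℝ) * x) := by rw [h1]
    _ = q ^ ((S * l : ℕ) : ℝ) * q ^ ((l:ℝ) * x) := Real.rpow_add hq0 _ _
    _ = (q ^ l) ^ S * q ^ ((l:ℝ) * x) := by rw [Real.rpow_natCast, pow_mul']
    _ = q ^ ((l : ℝ) * x) * (q ^ l) ^ S := mul_comm _ _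

lemma aux_expand {q : ℝ} (hq0 : 0 < q) (n : ℕ) (x : ℝ) (S : ℕ) :
    qnum q ((S:ℝ) + x) ^ n
      = ∑ l ∈ range (n+1),
        ((1-q)⁻¹ ^ n * ((n.choose l : ℝ) * (-1)^l * q ^ ((l:ℝ)*x))) * ((q ^ l) ^ S) := by
  unfold qnum
  rw [div_pow, div_eq_mul_inv, ← inv_pow, sub_eq_neg_add, add_pow, Finset.sum_mul]
  refine Finset.sum_congr rfl fun l hl => ?_
  rw [one_pow, neg_pow, aux_rpow hq0 x S l]
  ring

noncomputable def auxD (q x : ℝ) (n l : ℕ) : ℝ :=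
  (1-q)⁻¹ ^ n * ((n.choose l : ℝ) * (-1)^l * q ^ ((l:ℝ)*x))

lemma aux_expand' {q : ℝ} (hq0 : 0 < q) (n : ℕ) (x : ℝ) (S : ℕ) :
    qnum q ((S:ℝ) + x) ^ n
      = ∑ l ∈ range (n+1), auxD q x n l * ((q ^ l) ^ S) := aux_expand hq0 n x S

theorem stmt_0 (n r : ℕ) (hr : 1 ≤ r) (q : ℝ) (hq0 : 0 < q) (hq1 : q < 1) (x : ℝ) :
    (∀ z : ℝ, 0 ≤ z → z < 1 →
      Summable (fun m : Fin r → ℕ =>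
        |(-1 : ℝ) ^ (∑ i, m i) * z ^ (∑ i, m i) * qnum q ((↑(∑ i, m i) : ℝ) + x) ^ n|) ∧
      Summable (fun m : ℕ =>
        |((m + r - 1).choose m : ℝ) * (-z) ^ m * qnum q ((m : ℝ) + x) ^ n|) ∧
      (∑' m : Fin r → ℕ,
          (-1 : ℝ) ^ (∑ i, m i) * z ^ (∑ i, m i) * qnum q ((↑(∑ i, m i) : ℝ) + x) ^ n) =
        ∑' m : ℕ, ((m + r - 1).choose m : ℝ) * (-z) ^ m * qnum q ((m : ℝ) + x) ^ n) ∧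
    Tendsto (fun z : ℝ => (2 : ℝ) ^ r *
        ∑' m : Fin r → ℕ,
          (-1 : ℝ) ^ (∑ i, m i) * z ^ (∑ i, m i) * qnum q ((↑(∑ i, m i) : ℝ) + x) ^ n)
      (nhdsWithin 1 (Set.Iio 1))
      (nhds ((2 : ℝ) ^ r / (1 - q) ^ n *
        ∑ l ∈ range (n + 1),
          (n.choose l : ℝ) * (-1) ^ l * q ^ ((l : ℝ) * x) / (1 + q ^ (l : ℝ)) ^ r)) := by
  have key : ∀ z : ℝ, 0 ≤ z → z < 1 →
      HasSum (fun m : Fin r → ℕ =>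
          (-1:ℝ)^(∑ i, m i) * z^(∑ i, m i) * qnum q ((↑(∑ i, m i):ℝ) + x)^n)
        (∑ l ∈ range (n+1), auxD q x n l * ((1 + z * q ^ l)⁻¹) ^ r) ∧
      HasSum (fun m : ℕ => ((m + r - 1).choose m : ℝ) * (-z)^m * qnum q ((m:ℝ)+x)^n)
        (∑ l ∈ range (n+1), auxD q x n l * ((1 + z * q ^ l)⁻¹) ^ r) := by
    intro z hz0 hz1
    have ht : ∀ l : ℕ, |(-(z * q ^ l))| < 1 := by
      intro l
      rw [abs_neg, abs_of_nonneg (by positivity)]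
      calc z * q ^ l ≤ z * 1 :=
            mul_le_mul_of_nonneg_left (pow_le_one₀ hq0.le hq1.le) hz0
        _ < 1 := by simpa using hz1
    constructor
    · have hl : ∀ l ∈ range (n+1),
          HasSum (fun m : Fin r → ℕ => auxD q x n l * (-(z * q ^ l)) ^ (∑ i, m i))
            (auxD q x n l * ((1 + z * q ^ l)⁻¹) ^ r) := by
        intro l _
        have h := (aux_geomPi r (-(z * q ^ l)) (ht l)).mul_left (auxD q x n l)
        simpa [sub_neg_eq_add] using h
      have hsum := hasSum_sum hl
      have hfun : (fun m : Fin r → ℕ =>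
            ∑ l ∈ range (n+1), auxD q x n l * (-(z * q ^ l)) ^ (∑ i, m i))
          = fun m : Fin r → ℕ =>
            (-1:ℝ)^(∑ i, m i) * z^(∑ i, m i) * qnum q ((↑(∑ i, m i):ℝ) + x)^n := by
        funext m
        rw [aux_expand' hq0 n x (∑ i, m i), Finset.mul_sum]
        refine Finset.sum_congr rfl fun l _ => ?_
        rw [show -(z * q ^ l) = (-1) * z * (q ^ l) by ring, mul_pow, mul_pow]
        ring
      rwa [hfun] at hsum
    · have hl : ∀ l ∈ range (n+1),
          HasSum (fun m : ℕ =>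
              auxD q x n l * (((m + (r-1)).choose (r-1) : ℝ) * (-(z * q ^ l)) ^ m))
            (auxD q x n l * ((1 + z * q ^ l)⁻¹) ^ r) := by
        intro l _
        have h := hasSum_choose_mul_geometric_of_norm_lt_one (𝕜 := ℝ) (r-1)
          (show ‖-(z * q ^ l)‖ < 1 by rw [Real.norm_eq_abs]; exact ht l)
        rw [show r - 1 + 1 = r by omega] at h
        have h2 := h.mul_left (auxD q x n l)
        simpa [sub_neg_eq_add, one_div, inv_pow] using h2
      have hsum := hasSum_sum hl
      have hfun : (fun m : ℕ =>
            ∑ l ∈ range (n+1),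
              auxD q x n l * (((m + (r-1)).choose (r-1) : ℝ) * (-(z * q ^ l)) ^ m))
          = fun m : ℕ => ((m + r - 1).choose m : ℝ) * (-z)^m * qnum q ((m:ℝ)+x)^n := by
        funext m
        have hc : ((m + r - 1).choose m : ℝ) = ((m + (r-1)).choose (r-1) : ℝ) := by
          have h1 : m + r - 1 = m + (r - 1) := by omega
          have h2 := Nat.choose_symm (Nat.le_add_right m (r-1))
          rw [Nat.add_sub_cancel_left] at h2
          rw [h1, ← h2]
        rw [aux_expand' hq0 n x m, hc, Finset.mul_sum]
        refine Finset.sum_congr rfl fun l _ => ?_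
        rw [show -(z * q ^ l) = (-z) * (q ^ l) by ring, mul_pow]
        ring
      rwa [hfun] at hsum
  constructor
  · intro z hz0 hz1
    obtain ⟨h1, h2⟩ := key z hz0 hz1
    exact ⟨h1.summable.abs, h2.summable.abs, h1.tsum_eq.trans h2.tsum_eq.symm⟩
  · have h01 : Set.Ioo (0:ℝ) 1 ∈ nhdsWithin 1 (Set.Iio 1) := by
      have h1 : Set.Ioi (0:ℝ) ∈ nhds (1:ℝ) := Ioi_mem_nhds one_pos
      have h2 : Set.Ioi (0:ℝ) ∩ Set.Iio 1 ∈ nhdsWithin (1:ℝ) (Set.Iio 1) :=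
        Filter.inter_mem (mem_nhdsWithin_of_mem_nhds h1) self_mem_nhdsWithin
      simpa [Set.Ioi_inter_Iio] using h2
    have hFt : Tendsto (fun z : ℝ => (2:ℝ)^r *
          ∑ l ∈ range (n+1), auxD q x n l * ((1 + z * q ^ l)⁻¹) ^ r)
        (nhdsWithin 1 (Set.Iio 1))
        (nhds ((2:ℝ)^r * ∑ l ∈ range (n+1), auxD q x n l * ((1 + q ^ l)⁻¹) ^ r)) := by
      refine Tendsto.const_mul _ (tendsto_finset_sum _ fun l _ => ?_)
      have hc : Continuous (fun z : ℝ => 1 + z * q ^ l) := by continuity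
      have h0 : Tendsto (fun z : ℝ => 1 + z * q ^ l) (nhdsWithin 1 (Set.Iio 1))
          (nhds (1 + q ^ l)) := by
        simpa using (hc.tendsto 1).mono_left nhdsWithin_le_nhds
      have hne : (1 + q ^ l : ℝ) ≠ 0 := by positivity
      exact ((h0.inv₀ hne).pow r).const_mul _
    have heq : (fun z : ℝ => (2:ℝ)^r *
          ∑ l ∈ range (n+1), auxD q x n l * ((1 + z * q ^ l)⁻¹) ^ r)
        =ᶠ[nhdsWithin 1 (Set.Iio 1)]
        (fun z : ℝ => (2 : ℝ) ^ r *
          ∑' m : Fin r → ℕ,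
            (-1 : ℝ) ^ (∑ i, m i) * z ^ (∑ i, m i) * qnum q ((↑(∑ i, m i) : ℝ) + x) ^ n) := by
      filter_upwards [h01] with z hz
      rw [(key z hz.1.le hz.2).1.tsum_eq]
    have hval : (2 : ℝ) ^ r / (1 - q) ^ n *
          ∑ l ∈ range (n + 1),
            (n.choose l : ℝ) * (-1) ^ l * q ^ ((l : ℝ) * x) / (1 + q ^ (l : ℝ)) ^ r
        = (2:ℝ)^r * ∑ l ∈ range (n+1), auxD q x n l * ((1 + q ^ l)⁻¹) ^ r := by
      rw [div_eq_mul_inv, mul_assoc, Finset.mul_sum, Finset.mul_sum, Finset.mul_sum]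
      refine Finset.sum_congr rfl fun l _ => ?_
      rw [Real.rpow_natCast q l]
      unfold auxD
      rw [← inv_pow]
      ring
    rw [hval]
    exact hFt.congr' heq
end

section
/- Let f be an odd positive integer, χ a Dirichlet character modulo f (viewed as a function on ℕ), n ≥ 0 and r ≥ 1 integers, q real with 0 < q < 1, and x real. Then the following three quantities are equal, with both Abel limits existing: (i) (2^r/(1-q)^n) Σ_{l=0}^n C(n,l) q^{lx} (-1)^l Σ_{(a_1,…,a_r)∈{0,…,f-1}^r} (∏_{j=1}^r χ(a_j)) (-q^l)^{a_1+⋯+a_r} / (1+q^{lf})^r; (ii) lim_{z→1⁻} 2^r Σ_{m=0}^∞ C(m+r-1,m) (-z)^m Σ_{(a_1,…,a_r)∈{0,…,f-1}^r} (∏_{j=1}^r χ(a_j)) (-1)^{a_1+⋯+a_r} [a_1+⋯+a_r + x + m f]_q^n; (iii) lim_{z→1⁻} 2^r Σ_{(m_1,…,m_r)∈ℕ^r} (∏_{j=1}^r χ(m_j)) (-1)^{m_1+⋯+m_r} z^{m_1+⋯+m_r} [x + m_1+⋯+m_r]_q^n. -/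
open Finset Filter

lemma qnum_pow_c {q : ℝ} (hq0 : 0 < q) (n : ℕ) (y : ℝ) :
    ((qnum q y ^ n : ℝ) : ℂ) = ((1 : ℂ) - (q : ℂ))⁻¹ ^ n *
      ∑ l ∈ range (n + 1), (n.choose l : ℂ) * (-1) ^ l * ((q ^ ((l : ℝ) * y) : ℝ) : ℂ) := by
  have h1 : (1 - q ^ y) ^ n = ∑ l ∈ range (n + 1), (n.choose l : ℝ) * (-1) ^ l * q ^ ((l : ℝ) * y) := by
    rw [sub_eq_add_neg, add_comm, add_pow]
    refine Finset.sum_congr rfl fun l hl => ?_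
    rw [one_pow, neg_pow, ← Real.rpow_natCast (q ^ y) l, ← Real.rpow_mul hq0.le, mul_comm y]
    ring
  have h2 : qnum q y ^ n = ((1 - q)⁻¹) ^ n *
      ∑ l ∈ range (n + 1), (n.choose l : ℝ) * (-1) ^ l * q ^ ((l : ℝ) * y) := by
    rw [qnum, div_eq_mul_inv, mul_pow, h1]; ring
  rw [h2]
  push_cast
  ring

lemma rpow_split {q : ℝ} (hq0 : 0 < q) (l s c : ℕ) (x : ℝ) :
    ((q ^ ((l : ℝ) * ((s : ℝ) + x + (c : ℕ))) : ℝ) : ℂ) =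
      ((q ^ ((l : ℝ) * x) : ℝ) : ℂ) * (q : ℂ) ^ (l * s) * (q : ℂ) ^ (l * c) := by
  rw [show (l : ℝ) * ((s : ℝ) + x + (c : ℕ)) = (l : ℝ) * x + ((l * s : ℕ) : ℝ) + ((l * c : ℕ) : ℝ)
    by push_cast; ring]
  rw [Real.rpow_add hq0, Real.rpow_add hq0, Real.rpow_natCast, Real.rpow_natCast]
  push_cast
  ring

lemma rpow_split2 {q : ℝ} (hq0 : 0 < q) (l s : ℕ) (x : ℝ) :
    ((q ^ ((l : ℝ) * (x + (s : ℝ))) : ℝ) : ℂ) =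
      ((q ^ ((l : ℝ) * x) : ℝ) : ℂ) * (q : ℂ) ^ (l * s) := by
  rw [show (l : ℝ) * (x + (s : ℝ)) = (l : ℝ) * x + ((l * s : ℕ) : ℝ) by push_cast; ring]
  rw [Real.rpow_add hq0, Real.rpow_natCast]
  push_cast
  ring

lemma choose_tsum {t : ℂ} (ht : ‖t‖ < 1) {r : ℕ} (hr : 1 ≤ r) :
    HasSum (fun m : ℕ => ((m + (r - 1)).choose (r - 1) : ℂ) * t ^ m) (1 / (1 - t) ^ r) := by
  have h := hasSum_choose_mul_geometric_of_norm_lt_one (𝕜 := ℂ) (r - 1) ht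
  rw [show r - 1 + 1 = r by omega] at h
  exact h

lemma choose_reindex {r : ℕ} (hr : 1 ≤ r) (m : ℕ) :
    (m + r - 1).choose m = (m + (r - 1)).choose (r - 1) := by
  rw [show m + r - 1 = m + (r - 1) by omega]
  rw [← Nat.choose_symm (Nat.le_add_left (r - 1) m), Nat.add_sub_cancel]

set_option maxHeartbeats 2000000 in
lemma char_geom {f : ℕ} (hf : 0 < f) (χ : DirichletCharacter ℂ f) {w : ℂ} (hw : ‖w‖ < 1) :
    HasSum (fun k : ℕ => χ ((k : ℕ) : ZMod f) * w ^ k)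
      ((∑ a : Fin f, χ ((a : ℕ) : ZMod f) * w ^ (a : ℕ)) / (1 - w ^ f)) := by
  haveI : NeZero f := ⟨hf.ne'⟩
  have hwf : ‖w ^ f‖ < 1 := by
    rw [norm_pow]
    exact pow_lt_one₀ (norm_nonneg w) hw hf.ne'
  have hg : HasSum (fun k : ℕ => (w ^ f) ^ k) (1 - w ^ f)⁻¹ :=
    hasSum_geometric_of_norm_lt_one hwf
  have hfin : HasSum (fun a : Fin f => χ ((a : ℕ) : ZMod f) * w ^ (a : ℕ))
      (∑ a : Fin f, χ ((a : ℕ) : ZMod f) * w ^ (a : ℕ)) := hasSum_fintype _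
  have hsummable : Summable (fun p : ℕ × Fin f => (w ^ f) ^ p.1 *
      (χ ((p.2 : ℕ) : ZMod f) * w ^ (p.2 : ℕ))) := by
    have h2 : Summable (fun p : ℕ × Fin f => ‖(w ^ f) ^ p.1‖ *
        ‖χ ((p.2 : ℕ) : ZMod f) * w ^ (p.2 : ℕ)‖) :=
      Summable.mul_of_nonneg (f := fun k : ℕ => ‖(w ^ f) ^ k‖)
        (g := fun a : Fin f => ‖χ ((a : ℕ) : ZMod f) * w ^ (a : ℕ)‖)
        (hg.summable.norm) (hfin.summable.norm)
        (fun _ => norm_nonneg _) (fun _ => norm_nonneg _)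
    exact Summable.of_norm (h2.congr fun p => (norm_mul _ _).symm)
  have H := HasSum.mul (f := fun k : ℕ => (w ^ f) ^ k)
    (g := fun a : Fin f => χ ((a : ℕ) : ZMod f) * w ^ (a : ℕ)) hg hfin hsummable
  have H2 := (Equiv.hasSum_iff (Nat.divModEquiv f)).mpr H
  rw [div_eq_mul_inv, mul_comm]
  refine H2.congr_fun fun m => ?_
  simp only [Function.comp, Nat.divModEquiv_apply, Fin.val_natCast, Fin.val_ofNat]
  rw [ZMod.natCast_mod, ← pow_mul, mul_left_comm, ← pow_add, Nat.div_add_mod]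

lemma hasSum_pi_prod {𝕜 : Type*} [NormedField 𝕜] [CompleteSpace 𝕜] {g : ℕ → 𝕜}
    (hg : Summable fun k => ‖g k‖) :
    ∀ r : ℕ, HasSum (fun m : Fin r → ℕ => ∏ j, g (m j)) ((∑' k, g k) ^ r) ∧
      Summable (fun m : Fin r → ℕ => ∏ j, ‖g (m j)‖) := by
  intro r
  induction r with
  | zero =>
    constructor
    · simpa using hasSum_single (f := fun _ : Fin 0 → ℕ => (1 : 𝕜)) default
        (fun b hb => absurd (Subsingleton.elim b default) hb)
    · simpa using (hasSum_single (f := fun _ : Fin 0 → ℕ => (1 : ℝ)) default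
        (fun b hb => absurd (Subsingleton.elim b default) hb)).summable
  | succ r ih =>
    obtain ⟨ih1, ih2⟩ := ih
    have hnorm : Summable (fun p : ℕ × (Fin r → ℕ) => ‖g p.1‖ * ∏ j, ‖g (p.2 j)‖) :=
      Summable.mul_of_nonneg (f := fun k => ‖g k‖) (g := fun m : Fin r → ℕ => ∏ j, ‖g (m j)‖)
        hg ih2 (fun _ => norm_nonneg _)
        (fun m => Finset.prod_nonneg fun j _ => norm_nonneg _)
    have hsummable : Summable (fun p : ℕ × (Fin r → ℕ) => g p.1 * ∏ j, g (p.2 j)) := by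
      refine Summable.of_norm (hnorm.congr fun p => ?_)
      rw [norm_mul, norm_prod]
    have H : HasSum (fun p : ℕ × (Fin r → ℕ) => g p.1 * ∏ j, g (p.2 j))
        ((∑' k, g k) * (∑' k, g k) ^ r) :=
      HasSum.mul (f := g) (g := fun m : Fin r → ℕ => ∏ j, g (m j))
        (hg.of_norm.hasSum) ih1 hsummable
    constructor
    · have H2 := (Equiv.hasSum_iff (Fin.consEquiv fun _ : Fin (r + 1) => ℕ).symm).mpr H
      rw [pow_succ']
      refine H2.congr_fun fun m => ?_
      simp [Fin.consEquiv, Fin.prod_univ_succ, Fin.tail]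
    · have H2 := (Equiv.summable_iff (Fin.consEquiv fun _ : Fin (r + 1) => ℕ).symm).mpr hnorm
      refine H2.congr fun m => ?_
      simp [Fin.consEquiv, Fin.prod_univ_succ, Fin.tail]

set_option maxHeartbeats 4000000 in
theorem stmt_1 (f : ℕ) (hf : 0 < f) (hfodd : Odd f) (χ : DirichletCharacter ℂ f)
    (n r : ℕ) (hr : 1 ≤ r) (q : ℝ) (hq0 : 0 < q) (hq1 : q < 1) (x : ℝ) :
    Tendsto (fun z : ℝ => (2 : ℂ) ^ r *
        ∑' m : ℕ, ((m + r - 1).choose m : ℂ) * (-(z : ℂ)) ^ m *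
          ∑ a : Fin r → Fin f, (∏ j, χ ((a j : ℕ) : ZMod f)) *
            (-1 : ℂ) ^ (∑ j, (a j : ℕ)) *
            ((qnum q ((↑(∑ j, (a j : ℕ)) : ℝ) + x + (m * f : ℕ)) ^ n : ℝ) : ℂ))
      (nhdsWithin 1 (Set.Iio 1))
      (nhds ((2 : ℂ) ^ r / ((1 : ℂ) - (q : ℂ)) ^ n *
        ∑ l ∈ range (n + 1), (n.choose l : ℂ) * ((q ^ ((l : ℝ) * x) : ℝ) : ℂ) * (-1) ^ l *
          (∑ a : Fin r → Fin f, (∏ j, χ ((a j : ℕ) : ZMod f)) *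
            (-(q : ℂ) ^ l) ^ (∑ j, (a j : ℕ))) / (((1 + q ^ (l * f) : ℝ)) : ℂ) ^ r)) ∧
    Tendsto (fun z : ℝ => (2 : ℂ) ^ r *
        ∑' m : Fin r → ℕ, (∏ j, χ ((m j : ℕ) : ZMod f)) * (-1 : ℂ) ^ (∑ j, m j) *
          (z : ℂ) ^ (∑ j, m j) * ((qnum q (x + (↑(∑ j, m j) : ℝ)) ^ n : ℝ) : ℂ))
      (nhdsWithin 1 (Set.Iio 1))
      (nhds ((2 : ℂ) ^ r / ((1 : ℂ) - (q : ℂ)) ^ n *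
        ∑ l ∈ range (n + 1), (n.choose l : ℂ) * ((q ^ ((l : ℝ) * x) : ℝ) : ℂ) * (-1) ^ l *
          (∑ a : Fin r → Fin f, (∏ j, χ ((a j : ℕ) : ZMod f)) *
            (-(q : ℂ) ^ l) ^ (∑ j, (a j : ℕ))) / (((1 + q ^ (l * f) : ℝ)) : ℂ) ^ r)) := by
  have hIoo : Set.Ioo (0:ℝ) 1 ∈ nhdsWithin (1:ℝ) (Set.Iio 1) := by
    rw [mem_nhdsWithin]
    exact ⟨Set.Ioi 0, isOpen_Ioi, by norm_num, fun y hy => ⟨hy.1, hy.2⟩⟩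
  have hnt : ∀ z ∈ Set.Ioo (0:ℝ) 1, ∀ c : ℕ, ‖-(z:ℂ) * (q:ℂ) ^ c‖ < 1 := by
    intro z hz c
    rw [norm_mul, norm_neg, norm_pow, Complex.norm_real, Complex.norm_real,
      Real.norm_eq_abs, Real.norm_eq_abs, abs_of_pos hz.1, abs_of_pos hq0]
    calc z * q ^ c ≤ z * 1 := by
          exact mul_le_mul_of_nonneg_left (pow_le_one₀ hq0.le hq1.le) hz.1.le
      _ < 1 := by rw [mul_one]; exact hz.2
  have hden : ∀ l : ℕ, ((1:ℂ) + (q:ℂ) ^ (l * f)) ≠ 0 := by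
    intro l
    have : ((1:ℂ) + (q:ℂ) ^ (l * f)) = (((1 + q ^ (l * f) : ℝ)) : ℂ) := by push_cast; ring
    rw [this, Ne, Complex.ofReal_eq_zero]
    positivity
  have hcast1 : Tendsto (fun z : ℝ => ((z:ℝ):ℂ)) (nhdsWithin (1:ℝ) (Set.Iio 1)) (nhds 1) := by
    have := Complex.continuous_ofReal.tendsto (1:ℝ)
    simpa using this.mono_left nhdsWithin_le_nhds
  constructor
  · -- Part A
    set S : ℕ → ℂ := fun l => ∑ a : Fin r → Fin f, (∏ j, χ ((a j : ℕ) : ZMod f)) *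
      (-(q : ℂ) ^ l) ^ (∑ j, (a j : ℕ)) with hS
    set N : ℕ → ℂ := fun l => (n.choose l : ℂ) * ((q ^ ((l : ℝ) * x) : ℝ) : ℂ) * (-1) ^ l * S l
      with hN
    -- the limit function
    have tendG : Tendsto (fun z : ℝ => (2 : ℂ) ^ r / ((1 : ℂ) - (q : ℂ)) ^ n *
        ∑ l ∈ range (n + 1), N l / (1 + (z:ℂ) * (q:ℂ) ^ (l * f)) ^ r)
        (nhdsWithin (1:ℝ) (Set.Iio 1))
        (nhds ((2 : ℂ) ^ r / ((1 : ℂ) - (q : ℂ)) ^ n *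
        ∑ l ∈ range (n + 1), N l / (((1 + q ^ (l * f) : ℝ)) : ℂ) ^ r)) := by
      refine Tendsto.const_mul _ (tendsto_finset_sum _ fun l _ => ?_)
      have hd : Tendsto (fun z : ℝ => ((1:ℂ) + (z:ℂ) * (q:ℂ) ^ (l * f)) ^ r)
          (nhdsWithin (1:ℝ) (Set.Iio 1)) (nhds (((1:ℂ) + (q:ℂ) ^ (l * f)) ^ r)) := by
        have := ((tendsto_const_nhds (x := (1:ℂ))).add
          (hcast1.mul (tendsto_const_nhds (x := ((q:ℂ) ^ (l * f)))))).pow r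
        simpa using this
      have := Tendsto.div (tendsto_const_nhds (x := N l)) hd (pow_ne_zero _ (hden l))
      convert this using 2
      · rfl
      push_cast; ring
    refine Tendsto.congr' ?_ tendG
    filter_upwards [hIoo] with z hz
    have hzn := hnt z hz
    -- pointwise rewriting of the summand
    have point : ∀ m : ℕ, ((m + r - 1).choose m : ℂ) * (-(z : ℂ)) ^ m *
          ∑ a : Fin r → Fin f, (∏ j, χ ((a j : ℕ) : ZMod f)) *
            (-1 : ℂ) ^ (∑ j, (a j : ℕ)) *
            ((qnum q ((↑(∑ j, (a j : ℕ)) : ℝ) + x + (m * f : ℕ)) ^ n : ℝ) : ℂ)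
        = ∑ l ∈ range (n + 1), (N l * ((1:ℂ) - (q:ℂ))⁻¹ ^ n) *
            (((m + (r - 1)).choose (r - 1) : ℂ) * (-(z:ℂ) * (q:ℂ) ^ (l * f)) ^ m) := by
      intro m
      rw [choose_reindex hr m]
      have e1 : ∀ a : Fin r → Fin f,
          ((qnum q ((↑(∑ j, (a j : ℕ)) : ℝ) + x + (m * f : ℕ)) ^ n : ℝ) : ℂ)
          = ((1 : ℂ) - (q : ℂ))⁻¹ ^ n * ∑ l ∈ range (n + 1), (n.choose l : ℂ) * (-1) ^ l *
              (((q ^ ((l : ℝ) * x) : ℝ) : ℂ) * (q : ℂ) ^ (l * (∑ j, (a j : ℕ))) *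
                (q : ℂ) ^ (l * (m * f))) := by
        intro a
        rw [qnum_pow_c hq0]
        congr 1
        refine Finset.sum_congr rfl fun l _ => ?_
        rw [rpow_split hq0]
      calc ((m + (r - 1)).choose (r - 1) : ℂ) * (-(z : ℂ)) ^ m *
          ∑ a : Fin r → Fin f, (∏ j, χ ((a j : ℕ) : ZMod f)) *
            (-1 : ℂ) ^ (∑ j, (a j : ℕ)) *
            ((qnum q ((↑(∑ j, (a j : ℕ)) : ℝ) + x + (m * f : ℕ)) ^ n : ℝ) : ℂ)
          = ∑ a : Fin r → Fin f, ∑ l ∈ range (n + 1),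
            (((m + (r - 1)).choose (r - 1) : ℂ) * (-(z : ℂ)) ^ m) *
            ((∏ j, χ ((a j : ℕ) : ZMod f)) * (-1 : ℂ) ^ (∑ j, (a j : ℕ))) *
            (((1 : ℂ) - (q : ℂ))⁻¹ ^ n * ((n.choose l : ℂ) * (-1) ^ l *
              (((q ^ ((l : ℝ) * x) : ℝ) : ℂ) * (q : ℂ) ^ (l * (∑ j, (a j : ℕ))) *
                (q : ℂ) ^ (l * (m * f))))) := by
            rw [Finset.mul_sum]
            refine Finset.sum_congr rfl fun a _ => ?_
            rw [e1 a]
            simp only [Finset.mul_sum]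
            exact Finset.sum_congr rfl fun l _ => by ring
        _ = ∑ l ∈ range (n + 1), ∑ a : Fin r → Fin f,
            (((m + (r - 1)).choose (r - 1) : ℂ) * (-(z : ℂ)) ^ m) *
            ((∏ j, χ ((a j : ℕ) : ZMod f)) * (-1 : ℂ) ^ (∑ j, (a j : ℕ))) *
            (((1 : ℂ) - (q : ℂ))⁻¹ ^ n * ((n.choose l : ℂ) * (-1) ^ l *
              (((q ^ ((l : ℝ) * x) : ℝ) : ℂ) * (q : ℂ) ^ (l * (∑ j, (a j : ℕ))) *
                (q : ℂ) ^ (l * (m * f))))) := Finset.sum_comm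
        _ = ∑ l ∈ range (n + 1), (N l * ((1:ℂ) - (q:ℂ))⁻¹ ^ n) *
            (((m + (r - 1)).choose (r - 1) : ℂ) * (-(z:ℂ) * (q:ℂ) ^ (l * f)) ^ m) := by
            refine Finset.sum_congr rfl fun l _ => ?_
            simp only [hN, hS, Finset.sum_mul, Finset.mul_sum]
            refine Finset.sum_congr rfl fun a _ => ?_
            rw [mul_pow, ← pow_mul, show l * f * m = l * (m * f) by ring,
              neg_pow ((q:ℂ) ^ l), ← pow_mul, Finset.mul_sum]
            ring
    rw [tsum_congr point]
    rw [Summable.tsum_finsetSum (fun l _ => Summable.mul_left _ ((choose_tsum (hzn (l * f)) hr).summable))]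
    have : ∀ l ∈ range (n + 1),
        (∑' m : ℕ, (N l * ((1:ℂ) - (q:ℂ))⁻¹ ^ n) *
          (((m + (r - 1)).choose (r - 1) : ℂ) * (-(z:ℂ) * (q:ℂ) ^ (l * f)) ^ m))
        = (N l * ((1:ℂ) - (q:ℂ))⁻¹ ^ n) * (1 / (1 - (-(z:ℂ) * (q:ℂ) ^ (l * f))) ^ r) := by
      intro l _
      rw [tsum_mul_left, (choose_tsum (hzn (l * f)) hr).tsum_eq]
    rw [Finset.sum_congr rfl this, div_eq_mul_inv ((2:ℂ)^r), ← inv_pow]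
    simp only [Finset.mul_sum]
    refine Finset.sum_congr rfl fun l _ => ?_
    rw [neg_mul, sub_neg_eq_add]
    ring
  · -- Part B
    have hQnorm : ∀ z ∈ Set.Ioo (0:ℝ) 1, ∀ l : ℕ, ‖-(z:ℂ) * (q:ℂ) ^ l‖ < 1 := hnt
    -- limit function H
    have tendH : Tendsto (fun z : ℝ => (2 : ℂ) ^ r / ((1 : ℂ) - (q : ℂ)) ^ n *
        ∑ l ∈ range (n + 1), ((n.choose l : ℂ) * ((q ^ ((l : ℝ) * x) : ℝ) : ℂ) * (-1) ^ l) *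
          ((∑ a : Fin f, χ ((a : ℕ) : ZMod f) * (-(z:ℂ) * (q:ℂ) ^ l) ^ (a : ℕ)) /
            (1 - (-(z:ℂ) * (q:ℂ) ^ l) ^ f)) ^ r)
        (nhdsWithin (1:ℝ) (Set.Iio 1))
        (nhds ((2 : ℂ) ^ r / ((1 : ℂ) - (q : ℂ)) ^ n *
        ∑ l ∈ range (n + 1), ((n.choose l : ℂ) * ((q ^ ((l : ℝ) * x) : ℝ) : ℂ) * (-1) ^ l) *
          ((∑ a : Fin f, χ ((a : ℕ) : ZMod f) * (-(1:ℂ) * (q:ℂ) ^ l) ^ (a : ℕ)) /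
            (1 - (-(1:ℂ) * (q:ℂ) ^ l) ^ f)) ^ r)) := by
      refine Tendsto.const_mul _ (tendsto_finset_sum _ fun l _ => ?_)
      refine Tendsto.const_mul _ (Tendsto.pow ?_ r)
      have hw : Tendsto (fun z : ℝ => -(z:ℂ) * (q:ℂ) ^ l) (nhdsWithin (1:ℝ) (Set.Iio 1))
          (nhds (-(1:ℂ) * (q:ℂ) ^ l)) :=
        (hcast1.neg).mul (tendsto_const_nhds (x := ((q:ℂ) ^ l)))
      have hd0 : (1 : ℂ) - (-(1:ℂ) * (q:ℂ) ^ l) ^ f ≠ 0 := by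
        rw [neg_one_mul, hfodd.neg_pow, ← pow_mul, sub_neg_eq_add]
        exact hden l
      exact Tendsto.div
        (tendsto_finset_sum _ fun a _ => (hw.pow (a : ℕ)).const_mul _)
        ((tendsto_const_nhds (x := (1:ℂ))).sub (hw.pow f)) hd0
    -- value of the limit equals the stated value
    have valeq : ((2 : ℂ) ^ r / ((1 : ℂ) - (q : ℂ)) ^ n *
        ∑ l ∈ range (n + 1), ((n.choose l : ℂ) * ((q ^ ((l : ℝ) * x) : ℝ) : ℂ) * (-1) ^ l) *
          ((∑ a : Fin f, χ ((a : ℕ) : ZMod f) * (-(1:ℂ) * (q:ℂ) ^ l) ^ (a : ℕ)) /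
            (1 - (-(1:ℂ) * (q:ℂ) ^ l) ^ f)) ^ r)
        = ((2 : ℂ) ^ r / ((1 : ℂ) - (q : ℂ)) ^ n *
        ∑ l ∈ range (n + 1), (n.choose l : ℂ) * ((q ^ ((l : ℝ) * x) : ℝ) : ℂ) * (-1) ^ l *
          (∑ a : Fin r → Fin f, (∏ j, χ ((a j : ℕ) : ZMod f)) *
            (-(q : ℂ) ^ l) ^ (∑ j, (a j : ℕ))) / (((1 + q ^ (l * f) : ℝ)) : ℂ) ^ r) := by
      congr 1
      refine Finset.sum_congr rfl fun l _ => ?_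
      rw [div_pow]
      have h1 : ((∑ a : Fin f, χ ((a : ℕ) : ZMod f) * (-(1:ℂ) * (q:ℂ) ^ l) ^ (a : ℕ)) ^ r)
          = ∑ a : Fin r → Fin f, (∏ j, χ ((a j : ℕ) : ZMod f)) *
            (-(q : ℂ) ^ l) ^ (∑ j, (a j : ℕ)) := by
        rw [Fintype.sum_pow (fun a : Fin f => χ ((a : ℕ) : ZMod f) *
          (-(1:ℂ) * (q:ℂ) ^ l) ^ (a : ℕ)) r]
        refine Finset.sum_congr rfl fun a _ => ?_
        rw [Finset.prod_mul_distrib, Finset.prod_pow_eq_pow_sum, neg_one_mul]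
      have h2 : ((1 : ℂ) - (-(1:ℂ) * (q:ℂ) ^ l) ^ f) ^ r = (((1 + q ^ (l * f) : ℝ)) : ℂ) ^ r := by
        rw [neg_one_mul, hfodd.neg_pow, ← pow_mul, sub_neg_eq_add]
        congr 1
        push_cast
        ring
      rw [h1, h2]
      ring
    rw [valeq] at tendH
    refine Tendsto.congr' ?_ tendH
    filter_upwards [hIoo] with z hz
    have hzn := hnt z hz
    -- pointwise expansion
    have point : ∀ m : Fin r → ℕ,
        (∏ j, χ ((m j : ℕ) : ZMod f)) * (-1 : ℂ) ^ (∑ j, m j) *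
          (z : ℂ) ^ (∑ j, m j) * ((qnum q (x + (↑(∑ j, m j) : ℝ)) ^ n : ℝ) : ℂ)
        = ∑ l ∈ range (n + 1),
            (((n.choose l : ℂ) * ((q ^ ((l : ℝ) * x) : ℝ) : ℂ) * (-1) ^ l) *
              ((1:ℂ) - (q:ℂ))⁻¹ ^ n) *
            ∏ j, (χ ((m j : ℕ) : ZMod f) * (-(z:ℂ) * (q:ℂ) ^ l) ^ (m j)) := by
      intro m
      rw [qnum_pow_c hq0]
      rw [show ∑ l ∈ range (n + 1), (n.choose l : ℂ) * (-1) ^ l *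
            ((q ^ ((l : ℝ) * (x + (↑(∑ j, m j) : ℝ))) : ℝ) : ℂ)
          = ∑ l ∈ range (n + 1), (n.choose l : ℂ) * (-1) ^ l *
            (((q ^ ((l : ℝ) * x) : ℝ) : ℂ) * (q : ℂ) ^ (l * (∑ j, m j)))
        from Finset.sum_congr rfl fun l _ => by rw [rpow_split2 hq0]]
      simp only [Finset.mul_sum]
      refine Finset.sum_congr rfl fun l _ => ?_
      rw [Finset.prod_mul_distrib, Finset.prod_pow_eq_pow_sum, mul_pow, ← pow_mul,
        neg_pow (z:ℂ), Finset.mul_sum]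
      ring
    rw [tsum_congr point]
    have hgsum : ∀ l : ℕ, Summable (fun k : ℕ => ‖χ ((k : ℕ) : ZMod f) *
        (-(z:ℂ) * (q:ℂ) ^ l) ^ k‖) := by
      intro l
      refine Summable.of_nonneg_of_le (fun k => norm_nonneg _) (fun k => ?_)
        (summable_geometric_of_lt_one (norm_nonneg _) (hzn l))
      rw [norm_mul, norm_pow]
      exact mul_le_of_le_one_left (pow_nonneg (norm_nonneg _) k) (χ.norm_le_one _)
    rw [Summable.tsum_finsetSum (fun l _ => Summable.mul_left _ ((hasSum_pi_prod (hgsum l) r).1.summable))]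
    have hper : ∀ l ∈ range (n + 1),
        (∑' (m : Fin r → ℕ), (((n.choose l : ℂ) * ((q ^ ((l : ℝ) * x) : ℝ) : ℂ) * (-1) ^ l) *
              ((1:ℂ) - (q:ℂ))⁻¹ ^ n) *
            ∏ j, (χ ((m j : ℕ) : ZMod f) * (-(z:ℂ) * (q:ℂ) ^ l) ^ (m j)))
        = (((n.choose l : ℂ) * ((q ^ ((l : ℝ) * x) : ℝ) : ℂ) * (-1) ^ l) *
              ((1:ℂ) - (q:ℂ))⁻¹ ^ n) *
            ((∑ a : Fin f, χ ((a : ℕ) : ZMod f) * (-(z:ℂ) * (q:ℂ) ^ l) ^ (a : ℕ)) /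
              (1 - (-(z:ℂ) * (q:ℂ) ^ l) ^ f)) ^ r := by
      intro l _
      rw [tsum_mul_left, (hasSum_pi_prod (hgsum l) r).1.tsum_eq,
        (char_geom hf χ (hzn l)).tsum_eq]
    rw [Finset.sum_congr rfl hper, div_eq_mul_inv ((2:ℂ)^r), ← inv_pow]
    simp only [Finset.mul_sum]
    exact Finset.sum_congr rfl fun l _ => by ring
end

section
/- Let f be an odd positive integer, χ a Dirichlet character modulo f, n ≥ 0 an integer, q real with 0 < q < 1, and x real. Define E_{n,q}(x) = (2/(1-q)^n) Σ_{l=0}^n C(n,l)(-1)^l q^{lx}/(1+q^l) and E_{n,χ,q}(x) = (2/(1-q)^n) Σ_{l=0}^n C(n,l)(-1)^l q^{lx} Σ_{a=0}^{f-1} χ(a)(-1)^a q^{la}/(1+q^{lf}). Then the distribution relation E_{n,χ,q}(x) = [f]_q^n Σ_{a=0}^{f-1} χ(a)(-1)^a E_{n,q^f}((x+a)/f) holds. -/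
open Finset

/-- The `q`-Euler polynomial `E_{n,Q}(y) = (2/(1-Q)^n) Σ_{l=0}^n C(n,l)(-1)^l Q^{ly}/(1+Q^l)`. -/
noncomputable def qEuler (n : ℕ) (Q y : ℝ) : ℝ :=
  2 / (1 - Q) ^ n *
    ∑ l ∈ range (n + 1), (n.choose l : ℝ) * (-1) ^ l * Q ^ ((l : ℝ) * y) / (1 + Q ^ (l : ℝ))

theorem stmt_2 (f : ℕ) (hf : 0 < f) (hfodd : Odd f) (χ : DirichletCharacter ℂ f)
    (n : ℕ) (q : ℝ) (hq0 : 0 < q) (hq1 : q < 1) (x : ℝ) :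
    (2 : ℂ) / ((1 : ℂ) - (q : ℂ)) ^ n *
        ∑ l ∈ range (n + 1), (n.choose l : ℂ) * (-1) ^ l * ((q ^ ((l : ℝ) * x) : ℝ) : ℂ) *
          ∑ a ∈ range f, χ (a : ZMod f) * (-1) ^ a * (q : ℂ) ^ (l * a) /
            (((1 + q ^ (l * f) : ℝ)) : ℂ) =
      ((qnum q f ^ n : ℝ) : ℂ) *
        ∑ a ∈ range f, χ (a : ZMod f) * (-1) ^ a *
          ((qEuler n (q ^ f) ((x + a) / f) : ℝ) : ℂ) := by
  have hfR : (f : ℝ) ≠ 0 := Nat.cast_ne_zero.mpr hf.ne'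
  have hqf1 : q ^ f < 1 := pow_lt_one₀ hq0.le hq1 hf.ne'
  have hA : (1 - q ^ f : ℝ) ≠ 0 := by linarith
  have hB : (1 - q : ℝ) ≠ 0 := by linarith
  have hAC : ((1 : ℂ) - (q : ℂ) ^ f) ≠ 0 := by
    exact_mod_cast (Complex.ofReal_ne_zero.mpr hA)
  have hBC : ((1 : ℂ) - (q : ℂ)) ≠ 0 := by
    exact_mod_cast (Complex.ofReal_ne_zero.mpr hB)
  have hE : ∀ a : ℕ, qEuler n (q ^ f) ((x + a) / f) =
      2 / (1 - q ^ f) ^ n * ∑ l ∈ range (n + 1),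
        (n.choose l : ℝ) * (-1) ^ l * (q ^ ((l : ℝ) * x) * q ^ (l * a)) / (1 + q ^ (l * f)) := by
    intro a
    unfold qEuler
    congr 1
    refine Finset.sum_congr rfl fun l _ => ?_
    have h1 : (q ^ f) ^ ((l : ℝ) * ((x + a) / f)) = q ^ ((l : ℝ) * x) * q ^ (l * a) := by
      rw [← Real.rpow_natCast q f, ← Real.rpow_natCast q (l * a),
        ← Real.rpow_mul hq0.le, ← Real.rpow_add hq0]
      congr 1
      push_cast
      field_simp
    have h2 : (q ^ f) ^ ((l : ℝ)) = q ^ (l * f) := by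
      rw [← Real.rpow_natCast q f, ← Real.rpow_natCast q (l * f),
        ← Real.rpow_mul hq0.le]
      congr 1
      push_cast
      ring
    rw [h1, h2]
  have hqn : qnum q f = (1 - q ^ f) / (1 - q) := by
    unfold qnum
    rw [Real.rpow_natCast]
  have key : ∀ l a : ℕ, (1 + (q : ℂ) ^ (l * f)) ≠ 0 := by
    intro l a
    have : (0:ℝ) < 1 + q ^ (l * f) := by positivity
    exact_mod_cast Complex.ofReal_ne_zero.mpr this.ne'
  calc (2 : ℂ) / ((1 : ℂ) - (q : ℂ)) ^ n *
        ∑ l ∈ range (n + 1), (n.choose l : ℂ) * (-1) ^ l * ((q ^ ((l : ℝ) * x) : ℝ) : ℂ) *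
          ∑ a ∈ range f, χ (a : ZMod f) * (-1) ^ a * (q : ℂ) ^ (l * a) /
            (((1 + q ^ (l * f) : ℝ)) : ℂ)
      = ∑ l ∈ range (n + 1), ∑ a ∈ range f,
          (2 : ℂ) / ((1 : ℂ) - (q : ℂ)) ^ n * ((n.choose l : ℂ) * (-1) ^ l *
            ((q ^ ((l : ℝ) * x) : ℝ) : ℂ) * (χ (a : ZMod f) * (-1) ^ a * (q : ℂ) ^ (l * a) /
            (1 + (q:ℂ) ^ (l * f)))) := by
        simp only [Finset.mul_sum]
        refine Finset.sum_congr rfl fun l _ => ?_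
        refine Finset.sum_congr rfl fun a _ => ?_
        push_cast
        ring
    _ = ∑ a ∈ range f, ∑ l ∈ range (n + 1),
          (2 : ℂ) / ((1 : ℂ) - (q : ℂ)) ^ n * ((n.choose l : ℂ) * (-1) ^ l *
            ((q ^ ((l : ℝ) * x) : ℝ) : ℂ) * (χ (a : ZMod f) * (-1) ^ a * (q : ℂ) ^ (l * a) /
            (1 + (q:ℂ) ^ (l * f)))) := Finset.sum_comm
    _ = ((qnum q f ^ n : ℝ) : ℂ) *
        ∑ a ∈ range f, χ (a : ZMod f) * (-1) ^ a *
          ((qEuler n (q ^ f) ((x + a) / f) : ℝ) : ℂ) := by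
        simp only [hE, hqn]
        push_cast
        simp only [Finset.mul_sum]
        refine Finset.sum_congr rfl fun a _ => ?_
        refine Finset.sum_congr rfl fun l _ => ?_
        have h := key l a
        field_simp
        have e : ((1:ℂ) - q) ^ n * (-((q:ℂ) ^ f * (1 - (q:ℂ))⁻¹) + (1 - (q:ℂ))⁻¹) ^ n
            = (1 - (q:ℂ) ^ f) ^ n := by
          rw [← mul_pow]
          congr 1
          rw [mul_add, mul_neg, mul_left_comm ((1:ℂ) - q), mul_inv_cancel₀ hBC]
          ring
        linear_combination (-((n.choose l : ℂ) * ((q ^ ((l:ℝ) * x) : ℝ) : ℂ) * χ (a : ZMod f) * (q:ℂ) ^ (l * a))) * e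
end

section
/- Let r ≥ 1 be an integer, h an integer with h > r, n ≥ 0 an integer, q real with 0 < q < 1, and x a real number. Then the multiple series 2^r Σ_{(m_1,…,m_r)∈ℕ^r} q^{(h-1)m_1 + (h-2)m_2 + ⋯ + (h-r)m_r} (-1)^{m_1+⋯+m_r} [x + m_1+⋯+m_r]_q^n converges absolutely, and it equals both (2^r/(1-q)^n) Σ_{l=0}^n C(n,l) (-q^x)^l / (-q^{h-r+l}; q)_r and 2^r Σ_{m=0}^∞ C_q(m+r-1, m) (-q^{h-r})^m [x+m]_q^n, where the last single series also converges absolutely. -/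
open Finset

/-- The `q`-factorial `[k]_q! = [1]_q [2]_q ⋯ [k]_q`. -/
noncomputable def qfact (q : ℝ) (k : ℕ) : ℝ := ∏ i ∈ range k, qnum q ((i : ℝ) + 1)

/-- The Gaussian (`q`-)binomial coefficient `C_q(n,k) = [n]_q!/([k]_q!·[n-k]_q!)`. -/
noncomputable def qbinom (q : ℝ) (n k : ℕ) : ℝ := qfact q n / (qfact q k * qfact q (n - k))

/-- The `q`-Pochhammer symbol `(b;q)_r = ∏_{j=0}^{r-1} (1 - b q^j)`. -/
noncomputable def qpoch (b q : ℝ) (r : ℕ) : ℝ := ∏ i ∈ range r, (1 - b * q ^ i)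

section Aux
variable {q : ℝ}

lemma qnum_pos (hq0 : 0 < q) (hq1 : q < 1) {y : ℝ} (hy : 0 < y) : 0 < qnum q y := by
  have h1 : q ^ y < 1 := Real.rpow_lt_one hq0.le hq1 hy
  exact div_pos (by linarith) (by linarith)

lemma qnum_lt (hq0 : 0 < q) (hq1 : q < 1) (y : ℝ) : qnum q y < (1 - q)⁻¹ := by
  have h1 : 0 < q ^ y := Real.rpow_pos_of_pos hq0 y
  have h2 : (0:ℝ) < 1 - q := by linarith
  rw [qnum, div_lt_iff₀ h2, inv_mul_cancel₀ h2.ne']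
  linarith

lemma qnum_nonneg (hq0 : 0 < q) (hq1 : q < 1) {y : ℝ} (hy : 0 ≤ y) : 0 ≤ qnum q y := by
  have h1 : q ^ y ≤ 1 := Real.rpow_le_one hq0.le hq1.le hy
  exact div_nonneg (by linarith) (by linarith)

lemma qnum_add (hq0 : 0 < q) (hq1 : q < 1) (y z : ℝ) :
    qnum q (y + z) = qnum q y + q ^ y * qnum q z := by
  have h1 : (1:ℝ) - q ≠ 0 := by intro h; nlinarith
  rw [qnum, qnum, qnum, Real.rpow_add hq0]
  field_simp
  ring

lemma qfact_pos (hq0 : 0 < q) (hq1 : q < 1) (k : ℕ) : 0 < qfact q k :=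
  prod_pos fun i _ => qnum_pos hq0 hq1 (by positivity)

lemma qbinom_eq (hq0 : 0 < q) (hq1 : q < 1) (w m : ℕ) :
    qbinom q (m + w) m = (∏ i ∈ range w, qnum q ((m:ℝ) + (i:ℝ) + 1)) / qfact q w := by
  have h1 : qfact q m ≠ 0 := (qfact_pos hq0 hq1 m).ne'
  have h2 : qfact q (m + w) = qfact q m * ∏ i ∈ range w, qnum q ((m:ℝ) + (i:ℝ) + 1) := by
    rw [qfact, prod_range_add]
    exact congrArg _ (prod_congr rfl fun i _ => by congr 1; push_cast; ring)
  have h3 : qfact q w ≠ 0 := (qfact_pos hq0 hq1 w).ne'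
  rw [qbinom, show m + w - m = w by omega, h2,
    div_eq_div_iff (mul_ne_zero h1 h3) h3]
  ring

lemma qbinom_nonneg (hq0 : 0 < q) (hq1 : q < 1) (w m : ℕ) : 0 ≤ qbinom q (m + w) m := by
  rw [qbinom_eq hq0 hq1]
  exact div_nonneg (prod_nonneg fun i _ => (qnum_pos hq0 hq1 (by positivity)).le)
    (qfact_pos hq0 hq1 w).le

lemma qbinom_le (hq0 : 0 < q) (hq1 : q < 1) (w m : ℕ) :
    qbinom q (m + w) m ≤ (1 - q)⁻¹ ^ w / qfact q w := by
  rw [qbinom_eq hq0 hq1]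
  gcongr
  · exact (qfact_pos hq0 hq1 w).le
  calc ∏ i ∈ range w, qnum q ((m:ℝ) + (i:ℝ) + 1)
      ≤ ∏ i ∈ range w, (1 - q)⁻¹ := by
        apply prod_le_prod (fun i _ => (qnum_pos hq0 hq1 (by positivity)).le)
          (fun i _ => (qnum_lt hq0 hq1 _).le)
    _ = (1 - q)⁻¹ ^ w := by rw [prod_const, card_range]

lemma qbinom_self (hq0 : 0 < q) (hq1 : q < 1) (m : ℕ) : qbinom q m m = 1 := by
  have h1 : qfact q m ≠ 0 := (qfact_pos hq0 hq1 m).ne'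
  have h0 : qfact q 0 = 1 := prod_range_zero _
  rw [qbinom, Nat.sub_self, h0, mul_one, div_self h1]

lemma qbinom_zero (hq0 : 0 < q) (hq1 : q < 1) (w : ℕ) : qbinom q w 0 = 1 := by
  have h1 : qfact q w ≠ 0 := (qfact_pos hq0 hq1 w).ne'
  have h0 : qfact q 0 = 1 := prod_range_zero _
  rw [qbinom, Nat.sub_zero, h0, one_mul, div_self h1]

lemma qbinom_pascal (hq0 : 0 < q) (hq1 : q < 1) (w m : ℕ) :
    qbinom q ((m+1) + (w+1)) (m+1)
      = qbinom q (m + (w+1)) m + q ^ (m+1) * qbinom q ((m+1) + w) (m+1) := by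
  rw [qbinom_eq hq0 hq1, qbinom_eq hq0 hq1, qbinom_eq hq0 hq1]
  have hfw : qfact q w ≠ 0 := (qfact_pos hq0 hq1 w).ne'
  have hfw1 : qfact q (w+1) = qfact q w * qnum q ((w:ℝ) + 1) := by
    rw [qfact, prod_range_succ]; rfl
  have hN : qnum q ((w:ℝ) + 1) ≠ 0 := (qnum_pos hq0 hq1 (by positivity)).ne'
  set P3 : ℝ := ∏ i ∈ range w, qnum q ((m:ℝ) + (i:ℝ) + 2) with hP3
  have e1 : ∏ i ∈ range (w+1), qnum q (((m+1:ℕ):ℝ) + (i:ℝ) + 1)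
      = P3 * qnum q ((m:ℝ) + (w:ℝ) + 2) := by
    rw [prod_range_succ]
    congr 1
    · exact prod_congr rfl fun i _ => by congr 1; push_cast; ring
    · congr 1; push_cast; ring
  have e2 : ∏ i ∈ range (w+1), qnum q ((m:ℝ) + (i:ℝ) + 1) = qnum q ((m:ℝ)+1) * P3 := by
    rw [prod_range_succ', mul_comm]
    congr 1
    · congr 1; push_cast; ring
    · exact prod_congr rfl fun i _ => by congr 1; push_cast; ring
  have e3 : ∏ i ∈ range w, qnum q (((m+1:ℕ):ℝ) + (i:ℝ) + 1) = P3 :=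
    prod_congr rfl fun i _ => by congr 1; push_cast; ring
  have hp : q ^ ((m:ℝ)+1) = q ^ (m+1) := by
    rw [← Real.rpow_natCast q (m+1)]; push_cast; ring_nf
  have key : qnum q ((m:ℝ) + (w:ℝ) + 2) = qnum q ((m:ℝ)+1) + q^(m+1) * qnum q ((w:ℝ)+1) := by
    have h := qnum_add hq0 hq1 ((m:ℝ)+1) ((w:ℝ)+1)
    rw [show ((m:ℝ)+1) + ((w:ℝ)+1) = (m:ℝ) + (w:ℝ) + 2 by ring, hp] at h
    exact h
  rw [e1, e2, e3, hfw1, key]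
  field_simp

end Aux

section Gen
variable {q : ℝ}

lemma summable_qbinom (hq0 : 0 < q) (hq1 : q < 1) (w : ℕ) {t : ℝ} (ht : |t| < 1) :
    Summable fun m : ℕ => |qbinom q (m + w) m * t ^ m| := by
  apply Summable.of_nonneg_of_le (fun m => abs_nonneg _) (fun m => ?_)
    (((summable_geometric_of_lt_one (abs_nonneg t) ht)).mul_left ((1 - q)⁻¹ ^ w / qfact q w))
  rw [abs_mul, abs_pow]
  exact mul_le_mul_of_nonneg_right
    (by rw [abs_of_nonneg (qbinom_nonneg hq0 hq1 w m)]; exact qbinom_le hq0 hq1 w m)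
    (by positivity)

lemma qbinom_gen (hq0 : 0 < q) (hq1 : q < 1) :
    ∀ (w : ℕ) (t : ℝ), |t| < 1 →
    (∏ i ∈ range (w+1), (1 - q ^ i * t)) * ∑' m : ℕ, qbinom q (m + w) m * t ^ m = 1 := by
  intro w
  induction w with
  | zero =>
    intro t ht
    have h1 : ∀ m : ℕ, qbinom q (m + 0) m * t ^ m = t ^ m := fun m => by
      rw [Nat.add_zero, qbinom_self hq0 hq1, one_mul]
    rw [tsum_congr h1, tsum_geometric_of_norm_lt_one (by rwa [Real.norm_eq_abs]),
      prod_range_one, pow_zero, one_mul]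
    exact mul_inv_cancel₀ (by intro h; rw [sub_eq_zero] at h; simp [← h] at ht)
  | succ w ih =>
    intro t ht
    have hqt : |q * t| < 1 := by
      rw [abs_mul, abs_of_pos hq0]
      nlinarith [abs_nonneg t]
    have hsum1 : Summable fun m : ℕ => qbinom q (m + (w+1)) m * t ^ m :=
      (summable_qbinom hq0 hq1 (w+1) ht).of_abs
    have hsum2 : Summable fun m : ℕ => qbinom q (m + w) m * (q*t) ^ m :=
      (summable_qbinom hq0 hq1 w hqt).of_abs
    set A : ℝ := ∑' m : ℕ, qbinom q (m + (w+1)) m * t ^ m with hA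
    set B : ℝ := ∑' m : ℕ, qbinom q (m + w) m * (q*t) ^ m with hB
    have key : A = t * A + B := by
      have e1 : ∀ m : ℕ, qbinom q ((m+1) + (w+1)) (m+1) * t ^ (m+1)
          = t * (qbinom q (m + (w+1)) m * t ^ m)
            + qbinom q ((m+1) + w) (m+1) * (q*t) ^ (m+1) := by
        intro m
        rw [qbinom_pascal hq0 hq1]
        ring
      have hs1 : Summable fun m : ℕ => t * (qbinom q (m + (w+1)) m * t ^ m) :=
        hsum1.mul_left t
      have hs2 : Summable fun m : ℕ => qbinom q ((m+1) + w) (m+1) * (q*t) ^ (m+1) := by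
        have := (summable_nat_add_iff 1).2 hsum2
        exact this.congr fun m => rfl
      calc A = qbinom q (0 + (w+1)) 0 * t ^ 0
            + ∑' m : ℕ, qbinom q ((m+1) + (w+1)) (m+1) * t ^ (m+1) := by
            rw [hA, Summable.tsum_eq_zero_add hsum1]
        _ = 1 + ∑' m : ℕ, (t * (qbinom q (m + (w+1)) m * t ^ m)
            + qbinom q ((m+1) + w) (m+1) * (q*t) ^ (m+1)) := by
            rw [tsum_congr e1, qbinom_zero hq0 hq1, pow_zero, mul_one]
        _ = 1 + (t * A + ∑' m : ℕ, qbinom q ((m+1) + w) (m+1) * (q*t) ^ (m+1)) := by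
            rw [Summable.tsum_add hs1 hs2, tsum_mul_left]
        _ = 1 + (t * A + (B - qbinom q (0 + w) 0 * (q*t) ^ 0)) := by
            rw [hB, Summable.tsum_eq_zero_add hsum2]
            ring
        _ = t * A + B := by
            rw [qbinom_zero hq0 hq1, pow_zero, mul_one]
            ring
    have hprod : ∏ i ∈ range (w+1+1), (1 - q ^ i * t)
        = (∏ i ∈ range (w+1), (1 - q ^ i * (q*t))) * (1 - t) := by
      rw [prod_range_succ']
      congr 1
      · exact prod_congr rfl fun i _ => by ring
      · rw [pow_zero, one_mul]
    rw [hprod, mul_assoc, show (1 - t) * A = B by linear_combination key]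
    exact ih (q*t) hqt
end Gen

section PiProd

lemma summable_pi_abs : ∀ {r : ℕ} (f : Fin r → ℕ → ℝ),
    (∀ j, Summable fun k => |f j k|) →
    Summable fun m : Fin r → ℕ => |∏ j, f j (m j)| := by
  intro r
  induction r with
  | zero =>
    intro f _
    haveI : Finite (Fin 0 → ℕ) := Finite.of_subsingleton
    exact Summable.of_finite
  | succ r ih =>
    intro f hf
    rw [← (Fin.consEquiv (fun _ : Fin (r+1) => ℕ)).summable_iff]
    have key : ∀ p : ℕ × (Fin r → ℕ),
        |∏ j : Fin (r+1), f j (Fin.consEquiv (fun _ : Fin (r+1) => ℕ) p j)|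
          = ‖f 0 p.1 * ∏ j : Fin r, f j.succ (p.2 j)‖ := by
      intro p
      rw [Real.norm_eq_abs]
      congr 1
      rw [Fin.prod_univ_succ]
      simp only [Fin.consEquiv_apply, Fin.cons_zero, Fin.cons_succ]
    have hmn := Summable.mul_norm
      (f := f 0) (g := fun b : Fin r → ℕ => ∏ j : Fin r, f j.succ (b j))
      (by simpa only [Real.norm_eq_abs] using hf 0)
      (by simpa only [Real.norm_eq_abs] using ih (fun j => f j.succ) (fun j => hf j.succ))
    exact hmn.congr (fun p => (key p).symm)

lemma tsum_pi_prod : ∀ {r : ℕ} (f : Fin r → ℕ → ℝ),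
    (∀ j, Summable fun k => |f j k|) →
    ∑' m : Fin r → ℕ, ∏ j, f j (m j) = ∏ j, ∑' k, f j k := by
  intro r
  induction r with
  | zero =>
    intro f _
    simp only [univ_eq_empty, prod_empty]
    exact tsum_eq_single (default : Fin 0 → ℕ)
      (fun b hb => absurd (Subsingleton.elim b default) hb)
  | succ r ih =>
    intro f hf
    rw [← (Fin.consEquiv (fun _ : Fin (r+1) => ℕ)).tsum_eq
      (fun m : Fin (r+1) → ℕ => ∏ j, f j (m j))]
    have key : ∀ p : ℕ × (Fin r → ℕ),
        ∏ j : Fin (r+1), f j (Fin.consEquiv (fun _ : Fin (r+1) => ℕ) p j)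
          = f 0 p.1 * ∏ j : Fin r, f j.succ (p.2 j) := by
      intro p
      rw [Fin.prod_univ_succ]
      simp only [Fin.consEquiv_apply, Fin.cons_zero, Fin.cons_succ]
    rw [tsum_congr key]
    have hmul := tsum_mul_tsum_of_summable_norm
      (f := f 0) (g := fun b : Fin r → ℕ => ∏ j : Fin r, f j.succ (b j))
      (by simpa only [Real.norm_eq_abs] using hf 0)
      (by simpa only [Real.norm_eq_abs] using summable_pi_abs (fun j => f j.succ) (fun j => hf j.succ))
    rw [← hmul, ih (fun j => f j.succ) (fun j => hf j.succ), Fin.prod_univ_succ]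

end PiProd

section Helpers
variable {q : ℝ}

lemma zpow_sum' (hq : q ≠ 0) {ι : Type*} (s : Finset ι) (f : ι → ℤ) :
    q ^ (∑ i ∈ s, f i) = ∏ i ∈ s, q ^ f i := by
  classical
  induction s using Finset.induction with
  | empty => simp
  | insert _ _ hnot ih => rw [sum_insert hnot, prod_insert hnot, zpow_add₀ hq, ih]

lemma qzpow_pos (hq0 : 0 < q) (z : ℤ) : 0 < q ^ z := zpow_pos hq0 z

lemma qzpow_lt_one (hq0 : 0 < q) (hq1 : q < 1) {z : ℤ} (hz : 0 < z) : q ^ z < 1 := by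
  rw [← Real.rpow_intCast]
  exact Real.rpow_lt_one hq0.le hq1 (by exact_mod_cast hz)

lemma qzpow_le (hq0 : 0 < q) (hq1 : q < 1) {z z' : ℤ} (hz : z' ≤ z) : q ^ z ≤ q ^ z' := by
  rw [← Real.rpow_intCast, ← Real.rpow_intCast]
  exact Real.rpow_le_rpow_of_exponent_ge hq0 hq1.le (by exact_mod_cast hz)

lemma qnum_pow_expand (hq0 : 0 < q) (hq1 : q < 1) (x : ℝ) (n k : ℕ) :
    qnum q (x + (k:ℝ)) ^ n
      = ∑ l ∈ range (n+1), (n.choose l : ℝ) * (-(q^x))^l / (1-q)^n * (q^l)^k := by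
  have hk : q ^ ((k:ℕ):ℝ) = q ^ (k:ℕ) := Real.rpow_natCast q k
  rw [qnum, Real.rpow_add hq0, hk, div_pow]
  have hbin := add_pow (-(q^x * q^(k:ℕ))) 1 n
  rw [show -(q^x * q^(k:ℕ)) + 1 = 1 - q^x * q^(k:ℕ) by ring] at hbin
  rw [hbin, sum_div]
  refine sum_congr rfl fun l _ => ?_
  rw [neg_pow (q^x * q^(k:ℕ)) l, mul_pow, one_pow, ← pow_mul q k l, ← pow_mul q l k]
  ring

lemma qnum_abs_le (hq0 : 0 < q) (hq1 : q < 1) (x : ℝ) {c : ℝ} (hc : 0 ≤ c) :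
    |qnum q (x + c)| ≤ (1 + q ^ x) / (1 - q) := by
  have h1q : (0:ℝ) < 1 - q := by linarith
  have hP : (0:ℝ) < q ^ x := Real.rpow_pos_of_pos hq0 x
  have h2 : 0 < q ^ (x + c) := Real.rpow_pos_of_pos hq0 _
  have h3 : q ^ (x + c) ≤ q ^ x := by
    rw [Real.rpow_add hq0]
    nlinarith [Real.rpow_le_one hq0.le hq1.le hc, Real.rpow_pos_of_pos hq0 c]
  rw [qnum, abs_div, abs_of_pos h1q]
  gcongr
  rw [abs_le]
  constructor <;> nlinarith

end Helpers


theorem stmt_4 (r : ℕ) (hr : 1 ≤ r) (h : ℤ) (hh : (r : ℤ) < h) (n : ℕ)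
    (q : ℝ) (hq0 : 0 < q) (hq1 : q < 1) (x : ℝ) :
    Summable (fun m : Fin r → ℕ =>
      |q ^ (∑ j : Fin r, (h - 1 - (j : ℤ)) * (m j : ℤ)) * (-1 : ℝ) ^ (∑ j, m j) *
        qnum q (x + (↑(∑ j, m j) : ℝ)) ^ n|) ∧
    ((2 : ℝ) ^ r * ∑' m : Fin r → ℕ,
        q ^ (∑ j : Fin r, (h - 1 - (j : ℤ)) * (m j : ℤ)) * (-1 : ℝ) ^ (∑ j, m j) *
          qnum q (x + (↑(∑ j, m j) : ℝ)) ^ n =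
      (2 : ℝ) ^ r / (1 - q) ^ n *
        ∑ l ∈ range (n + 1),
          (n.choose l : ℝ) * (-(q ^ x)) ^ l / qpoch (-(q ^ (h - (r : ℤ) + (l : ℤ)))) q r) ∧
    ((2 : ℝ) ^ r * ∑' m : Fin r → ℕ,
        q ^ (∑ j : Fin r, (h - 1 - (j : ℤ)) * (m j : ℤ)) * (-1 : ℝ) ^ (∑ j, m j) *
          qnum q (x + (↑(∑ j, m j) : ℝ)) ^ n =
      (2 : ℝ) ^ r * ∑' m : ℕ,
        qbinom q (m + r - 1) m * (-(q ^ (h - (r : ℤ)))) ^ m * qnum q (x + (m : ℝ)) ^ n) ∧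
    Summable (fun m : ℕ =>
      |qbinom q (m + r - 1) m * (-(q ^ (h - (r : ℤ)))) ^ m * qnum q (x + (m : ℝ)) ^ n|) := by
  obtain ⟨w, rfl⟩ : ∃ w, r = w + 1 := ⟨r - 1, by omega⟩
  have h1q : (0:ℝ) < 1 - q := by linarith
  have hqne : q ≠ 0 := hq0.ne'
  have hP : (0:ℝ) < q ^ x := Real.rpow_pos_of_pos hq0 x
  have hhw : ((w:ℤ)) + 1 < h := by exact_mod_cast hh
  -- positivity facts for the ratios
  have hcpos : ∀ (j : Fin (w+1)) (l : ℕ), (0:ℝ) < q ^ (h - 1 - (j:ℤ) + (l:ℤ)) :=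
    fun j l => qzpow_pos hq0 _
  have hclt : ∀ (j : Fin (w+1)) (l : ℕ), q ^ (h - 1 - (j:ℤ) + (l:ℤ)) < 1 := by
    intro j l
    apply qzpow_lt_one hq0 hq1
    have hj : ((j:ℕ):ℤ) ≤ (w:ℤ) := by exact_mod_cast Fin.is_le j
    have hl : (0:ℤ) ≤ (l:ℤ) := Int.natCast_nonneg l
    omega
  -- binomial expansion of the general term
  have hexp : ∀ m : Fin (w+1) → ℕ,
      q ^ (∑ j : Fin (w+1), (h - 1 - (j : ℤ)) * (m j : ℤ)) * (-1 : ℝ) ^ (∑ j, m j) *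
        qnum q (x + (↑(∑ j, m j) : ℝ)) ^ n
      = ∑ l ∈ range (n+1), ((n.choose l : ℝ) * (-(q^x))^l / (1-q)^n) *
          ∏ j : Fin (w+1), (-(q ^ (h - 1 - (j : ℤ) + (l:ℤ))))^(m j) := by
    intro m
    rw [qnum_pow_expand hq0 hq1 x n (∑ j, m j), mul_sum]
    refine sum_congr rfl fun l _ => ?_
    have e1 : ∀ j : Fin (w+1), (-(q ^ (h - 1 - (j : ℤ) + (l:ℤ))))^(m j)
        = (-1:ℝ)^(m j) * q ^ ((h - 1 - (j : ℤ)) * (m j : ℤ)) * (q^l)^(m j) := by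
      intro j
      rw [show q ^ (h - 1 - (j : ℤ) + (l:ℤ)) = q ^ (h - 1 - (j : ℤ)) * q ^ l from by
        rw [zpow_add₀ hqne, zpow_natCast],
        neg_pow, mul_pow,
        show (q ^ (h - 1 - (j : ℤ)))^(m j) = q ^ ((h - 1 - (j : ℤ)) * (m j : ℤ)) from by
          rw [zpow_mul, zpow_natCast]]
      ring
    rw [prod_congr rfl (fun j _ => e1 j), prod_mul_distrib, prod_mul_distrib,
      prod_pow_eq_pow_sum, prod_pow_eq_pow_sum, ← zpow_sum' hqne]
    ring
  -- geometric summability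
  have hgeom : ∀ (j : Fin (w+1)) (l : ℕ),
      Summable fun k : ℕ => |(-(q ^ (h - 1 - (j:ℤ) + (l:ℤ))))^k| := by
    intro j l
    refine (summable_geometric_of_lt_one (hcpos j l).le (hclt j l)).congr fun k => ?_
    rw [abs_pow, abs_neg, abs_of_pos (hcpos j l)]
  have hGsum : ∀ l : ℕ,
      Summable fun m : Fin (w+1) → ℕ => |∏ j : Fin (w+1), (-(q ^ (h - 1 - (j:ℤ) + (l:ℤ))))^(m j)| :=
    fun l => summable_pi_abs _ (fun j => hgeom j l)
  have hGtsum : ∀ l : ℕ,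
      ∑' m : Fin (w+1) → ℕ, ∏ j : Fin (w+1), (-(q ^ (h - 1 - (j:ℤ) + (l:ℤ))))^(m j)
        = ∏ j : Fin (w+1), (1 + q ^ (h - 1 - (j:ℤ) + (l:ℤ)))⁻¹ := by
    intro l
    rw [tsum_pi_prod _ (fun j => hgeom j l)]
    refine prod_congr rfl fun j _ => ?_
    rw [tsum_geometric_of_norm_lt_one
      (by rw [norm_neg, Real.norm_eq_abs, abs_of_pos (hcpos j l)]; exact hclt j l),
      sub_neg_eq_add]
  -- conjunct 1 : absolute summability of the multi-series
  have habs : Summable (fun m : Fin (w+1) → ℕ =>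
      |q ^ (∑ j : Fin (w+1), (h - 1 - (j : ℤ)) * (m j : ℤ)) * (-1 : ℝ) ^ (∑ j, m j) *
        qnum q (x + (↑(∑ j, m j) : ℝ)) ^ n|) := by
    have hbase : Summable fun m : Fin (w+1) → ℕ => |∏ j : Fin (w+1), q ^ (m j)| :=
      summable_pi_abs (fun _ k => q ^ k)
        (fun j => (summable_geometric_of_lt_one hq0.le hq1).congr fun k => by
          rw [abs_pow, abs_of_pos hq0])
    apply Summable.of_nonneg_of_le (fun m => abs_nonneg _) ?_
      (hbase.mul_left (((1 + q^x)/(1-q))^n))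
    intro m
    have hS : (0:ℝ) ≤ (↑(∑ j, m j) : ℝ) := by positivity
    have hE : q ^ (∑ j : Fin (w+1), (h - 1 - (j : ℤ)) * (m j : ℤ)) ≤ ∏ j : Fin (w+1), q ^ (m j) := by
      rw [zpow_sum' hqne]
      refine prod_le_prod (fun j _ => (qzpow_pos hq0 _).le) (fun j _ => ?_)
      rw [← zpow_natCast q (m j)]
      refine qzpow_le hq0 hq1 ?_
      have hj : ((j:ℕ):ℤ) ≤ (w:ℤ) := by exact_mod_cast Fin.is_le j
      have h1 : (1:ℤ) ≤ h - 1 - (j:ℤ) := by omega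
      nlinarith [Int.natCast_nonneg (m j)]
    have hqn : |qnum q (x + (↑(∑ j, m j) : ℝ))| ^ n ≤ ((1 + q^x)/(1-q))^n :=
      pow_le_pow_left₀ (abs_nonneg _) (qnum_abs_le hq0 hq1 x hS) n
    have hpos : (0:ℝ) < q ^ (∑ j : Fin (w+1), (h - 1 - (j : ℤ)) * (m j : ℤ)) := qzpow_pos hq0 _
    have hprodpos : (0:ℝ) ≤ ∏ j : Fin (w+1), q ^ (m j) := prod_nonneg fun j _ => by positivity
    calc |q ^ (∑ j : Fin (w+1), (h - 1 - (j : ℤ)) * (m j : ℤ)) * (-1 : ℝ) ^ (∑ j, m j) *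
        qnum q (x + (↑(∑ j, m j) : ℝ)) ^ n|
        = q ^ (∑ j : Fin (w+1), (h - 1 - (j : ℤ)) * (m j : ℤ)) *
          |qnum q (x + (↑(∑ j, m j) : ℝ))| ^ n := by
          rw [abs_mul, abs_mul, abs_pow, abs_neg, abs_one, one_pow, mul_one, abs_pow,
            abs_of_pos hpos]
      _ ≤ (∏ j : Fin (w+1), q ^ (m j)) * ((1 + q^x)/(1-q))^n := by
          apply mul_le_mul hE hqn (by positivity) hprodpos
      _ = ((1 + q^x)/(1-q))^n * |∏ j : Fin (w+1), q ^ (m j)| := by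
          rw [abs_of_nonneg hprodpos]; ring
  -- value of the multi series
  have hsumG : ∀ l ∈ range (n+1), Summable fun m : Fin (w+1) → ℕ =>
      ((n.choose l : ℝ) * (-(q^x))^l / (1-q)^n) *
        ∏ j : Fin (w+1), (-(q ^ (h - 1 - (j : ℤ) + (l:ℤ))))^(m j) :=
    fun l _ => ((hGsum l).of_abs).mul_left _
  have hT : ∑' m : Fin (w+1) → ℕ,
      q ^ (∑ j : Fin (w+1), (h - 1 - (j : ℤ)) * (m j : ℤ)) * (-1 : ℝ) ^ (∑ j, m j) *
        qnum q (x + (↑(∑ j, m j) : ℝ)) ^ n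
      = ∑ l ∈ range (n+1), ((n.choose l : ℝ) * (-(q^x))^l / (1-q)^n) *
          ∏ j : Fin (w+1), (1 + q ^ (h - 1 - (j:ℤ) + (l:ℤ)))⁻¹ := by
    rw [tsum_congr hexp, Summable.tsum_finsetSum hsumG]
    exact sum_congr rfl fun l _ => by rw [tsum_mul_left, hGtsum l]
  -- the q-Pochhammer link
  have hpoch : ∀ l : ℕ, qpoch (-(q ^ (h - ((w+1:ℕ):ℤ) + (l:ℤ)))) q (w+1)
      = ∏ j : Fin (w+1), (1 + q ^ (h - 1 - (j:ℤ) + (l:ℤ))) := by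
    intro l
    have e : ∀ i ∈ range (w+1), (1 - (-(q ^ (h - ((w+1:ℕ):ℤ) + (l:ℤ)))) * q ^ i)
        = (fun i : ℕ => 1 + q ^ (h - 1 - (i:ℤ) + (l:ℤ))) (w + 1 - 1 - i) := by
      intro i hi
      have hi' : i ≤ w := by have := mem_range.mp hi; omega
      simp only
      have key : q ^ (h - 1 - ((w+1-1-i:ℕ):ℤ) + (l:ℤ))
          = q ^ (h - ((w+1:ℕ):ℤ) + (l:ℤ)) * q ^ i := by
        rw [← zpow_natCast q i, ← zpow_add₀ hqne]
        congr 1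
        omega
      rw [key]
      ring
    rw [qpoch, prod_congr rfl e, prod_range_reflect (fun i : ℕ => 1 + q ^ (h - 1 - (i:ℤ) + (l:ℤ))) (w+1),
      ← Fin.prod_univ_eq_prod_range (fun i : ℕ => 1 + q ^ (h - 1 - (i:ℤ) + (l:ℤ))) (w+1)]
  refine ⟨habs, ?_, ?_, ?_⟩
  · -- conjunct 2
    rw [hT, mul_sum, mul_sum]
    refine sum_congr rfl fun l hl => ?_
    rw [hpoch l, prod_inv_distrib]
    simp only [div_eq_mul_inv]
    ring
  · -- conjunct 3
    rw [hT]
    have hidx : ∀ m : ℕ, m + (w + 1) - 1 = m + w := fun m => by omega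
    have htpos : ∀ l : ℕ, 0 < q ^ (h - ((w+1:ℕ):ℤ) + (l:ℤ)) := fun l => qzpow_pos hq0 _
    have htlt : ∀ l : ℕ, q ^ (h - ((w+1:ℕ):ℤ) + (l:ℤ)) < 1 := fun l => by
      refine qzpow_lt_one hq0 hq1 ?_
      have hl : (0:ℤ) ≤ (l:ℤ) := Int.natCast_nonneg l
      omega
    have htabs : ∀ l : ℕ, |(-(q ^ (h - ((w+1:ℕ):ℤ) + (l:ℤ))))| < 1 := fun l => by
      rw [abs_neg, abs_of_pos (htpos l)]; exact htlt l
    have hexp2 : ∀ m : ℕ,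
        qbinom q (m + (w+1) - 1) m * (-(q ^ (h - ((w+1:ℕ):ℤ)))) ^ m * qnum q (x + (m:ℝ)) ^ n
        = ∑ l ∈ range (n+1), ((n.choose l : ℝ) * (-(q^x))^l / (1-q)^n) *
            (qbinom q (m + w) m * (-(q ^ (h - ((w+1:ℕ):ℤ) + (l:ℤ))))^m) := by
      intro m
      rw [hidx m, qnum_pow_expand hq0 hq1 x n m, mul_sum]
      refine sum_congr rfl fun l _ => ?_
      rw [show (-(q ^ (h - ((w+1:ℕ):ℤ) + (l:ℤ))))^m
          = (-(q ^ (h - ((w+1:ℕ):ℤ))))^m * (q^l)^m from by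
        rw [zpow_add₀ hqne, zpow_natCast, ← neg_mul, mul_pow]]
      ring
    have htsum2 : ∑' m : ℕ,
        qbinom q (m + (w+1) - 1) m * (-(q ^ (h - ((w+1:ℕ):ℤ)))) ^ m * qnum q (x + (m:ℝ)) ^ n
        = ∑ l ∈ range (n+1), ((n.choose l : ℝ) * (-(q^x))^l / (1-q)^n) *
            ∏ j : Fin (w+1), (1 + q ^ (h - 1 - (j:ℤ) + (l:ℤ)))⁻¹ := by
      rw [tsum_congr hexp2, Summable.tsum_finsetSum
        (fun l _ => ((summable_qbinom hq0 hq1 w (htabs l)).of_abs).mul_left _)]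
      refine sum_congr rfl fun l _ => ?_
      rw [tsum_mul_left, prod_inv_distrib]
      congr 1
      have hgen := qbinom_gen hq0 hq1 w (-(q ^ (h - ((w+1:ℕ):ℤ) + (l:ℤ)))) (htabs l)
      have heq : (∏ i ∈ range (w+1), (1 - q ^ i * (-(q ^ (h - ((w+1:ℕ):ℤ) + (l:ℤ))))))
          = ∏ j : Fin (w+1), (1 + q ^ (h - 1 - (j:ℤ) + (l:ℤ))) := by
        rw [← hpoch l, qpoch]
        exact prod_congr rfl fun i _ => by ring
      rw [heq] at hgen
      exact (inv_eq_of_mul_eq_one_right hgen).symm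
    rw [htsum2]
  · -- conjunct 4
    have hidx : ∀ m : ℕ, m + (w + 1) - 1 = m + w := fun m => by omega
    have ht0 : 0 < q ^ (h - ((w+1:ℕ):ℤ)) := qzpow_pos hq0 _
    have ht0lt : q ^ (h - ((w+1:ℕ):ℤ)) < 1 := qzpow_lt_one hq0 hq1 (by omega)
    apply Summable.of_nonneg_of_le (fun m => abs_nonneg _) ?_
      ((summable_geometric_of_lt_one ht0.le ht0lt).mul_left
        ((1-q)⁻¹^w / qfact q w * ((1 + q^x)/(1-q))^n))
    intro m
    have hqn : |qnum q (x + (m:ℝ))| ^ n ≤ ((1 + q^x)/(1-q))^n :=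
      pow_le_pow_left₀ (abs_nonneg _) (qnum_abs_le hq0 hq1 x (by positivity)) n
    calc |qbinom q (m + (w+1) - 1) m * (-(q ^ (h - ((w+1:ℕ):ℤ)))) ^ m * qnum q (x + (m:ℝ)) ^ n|
        = qbinom q (m + w) m * (q ^ (h - ((w+1:ℕ):ℤ)))^m * |qnum q (x + (m:ℝ))|^n := by
          rw [hidx m, abs_mul, abs_mul, abs_pow, abs_neg, abs_of_pos ht0, abs_pow,
            abs_of_nonneg (qbinom_nonneg hq0 hq1 w m)]
      _ ≤ ((1-q)⁻¹^w / qfact q w) * (q ^ (h - ((w+1:ℕ):ℤ)))^m * ((1 + q^x)/(1-q))^n := by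
          have h1 := qbinom_le hq0 hq1 w m
          have h2 := qbinom_nonneg hq0 hq1 w m
          have h3 : (0:ℝ) ≤ (q ^ (h - ((w+1:ℕ):ℤ)))^m := by positivity
          have hK1 : (0:ℝ) ≤ (1-q)⁻¹^w / qfact q w :=
            div_nonneg (pow_nonneg (inv_nonneg.mpr h1q.le) w) (qfact_pos hq0 hq1 w).le
          exact mul_le_mul (mul_le_mul h1 le_rfl h3 hK1) hqn (by positivity)
            (mul_nonneg hK1 h3)
      _ = (1-q)⁻¹^w / qfact q w * ((1 + q^x)/(1-q))^n * (q ^ (h - ((w+1:ℕ):ℤ)))^m := by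
          ring
end

section
/- Let r ≥ 1 and n ≥ 0 be integers, q real with 0 < q < 1, x a real number, and w_1, …, w_r positive real numbers. Then for each real z with 0 ≤ z < 1 the series Σ_{(m_1,…,m_r)∈ℕ^r} (-1)^{m_1+⋯+m_r} z^{m_1+⋯+m_r} [x + w_1 m_1 + ⋯ + w_r m_r]_q^n converges absolutely, and as z → 1⁻, 2^r times its value converges to the Barnes-type multiple q-Euler polynomial E_{n,q}^{(r)}(x|w_1,…,w_r) = (2^r/(1-q)^n) Σ_{l=0}^n C(n,l) (-q^x)^l / ((1+q^{l w_1})⋯(1+q^{l w_r})). -/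
open Finset Filter

/-- Explicit equivalence between `Fin (r+1) → ℕ` and `ℕ × (Fin r → ℕ)`. -/
def piSuccEquiv (r : ℕ) : (Fin (r + 1) → ℕ) ≃ ℕ × (Fin r → ℕ) where
  toFun m := (m 0, fun i => m i.succ)
  invFun p := Fin.cons p.1 p.2
  left_inv m := by
    funext i
    refine Fin.cases ?_ ?_ i <;> simp
  right_inv p := by simp

lemma aux_mul {ι : Type*} (G : ℕ → ℝ) (P : ι → ℝ) (hf : Summable fun k => |G k|)
    (hg : Summable fun m => |P m|) :
    Summable (fun p : ℕ × ι => |G p.1 * P p.2|) := by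
  simp only [← Real.norm_eq_abs] at *
  exact hf.mul_norm hg

lemma aux_tsum {ι : Type*} (G : ℕ → ℝ) (P : ι → ℝ) (hf : Summable fun k => |G k|)
    (hg : Summable fun m => |P m|) :
    (∑' p : ℕ × ι, G p.1 * P p.2) = (∑' k, G k) * ∑' m, P m := by
  simp only [← Real.norm_eq_abs] at hf hg
  exact (tsum_mul_tsum_of_summable_norm hf hg).symm

lemma pi_tsum_prod {r : ℕ} (g : Fin r → ℕ → ℝ) (h : ∀ i, Summable fun k => |g i k|) :
    Summable (fun m : Fin r → ℕ => |∏ i, g i (m i)|) ∧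
    (∑' m : Fin r → ℕ, ∏ i, g i (m i)) = ∏ i, ∑' k, g i k := by
  induction r with
  | zero =>
      constructor
      · exact .of_finite
      · rw [tsum_eq_single (default : Fin 0 → ℕ)
          (fun b hb => absurd (Subsingleton.elim b default) hb)]
        simp
  | succ r ih =>
      obtain ⟨ihS, ihT⟩ := ih (fun i => g i.succ) (fun i => h i.succ)
      obtain ⟨P, hP⟩ : ∃ P : (Fin r → ℕ) → ℝ, ∀ m, P m = ∏ i : Fin r, g i.succ (m i) :=
        ⟨_, fun _ => rfl⟩
      have key : ∀ m : Fin (r + 1) → ℕ,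
          ∏ i, g i (m i) = g 0 (m 0) * ∏ i : Fin r, g i.succ (m i.succ) := fun m =>
        Fin.prod_univ_succ _
      have ihS' : Summable fun m : Fin r → ℕ => |P m| :=
        ihS.congr fun m => by rw [hP]
      have hF : Summable (fun p : ℕ × (Fin r → ℕ) => |g 0 p.1 * P p.2|) :=
        aux_mul (ι := Fin r → ℕ) (g 0) P (h 0) ihS'
      have hFe : Summable fun m : Fin (r + 1) → ℕ => |∏ i, g i (m i)| := by
        have h2 := ((piSuccEquiv r).summable_iff
          (f := fun p : ℕ × (Fin r → ℕ) => |g 0 p.1 * P p.2|)).2 hF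
        refine h2.congr fun m => ?_
        simp only [piSuccEquiv, Equiv.coe_fn_mk, Function.comp]
        rw [hP, ← key m]
      refine ⟨hFe, ?_⟩
      have h1 : (∑' m : Fin (r + 1) → ℕ, ∏ i, g i (m i)) =
          ∑' p : ℕ × (Fin r → ℕ), g 0 p.1 * P p.2 := by
        rw [← (piSuccEquiv r).tsum_eq (f := fun p : ℕ × (Fin r → ℕ) => g 0 p.1 * P p.2)]
        refine tsum_congr fun m => ?_
        simp only [piSuccEquiv, Equiv.coe_fn_mk]
        rw [hP, ← key m]
      have h3 : (∑' m : Fin r → ℕ, P m) = ∏ i : Fin r, ∑' k, g i.succ k := by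
        rw [← ihT]; exact tsum_congr fun m => hP m
      rw [h1, aux_tsum (ι := Fin r → ℕ) (g 0) P (h 0) ihS', h3, Fin.prod_univ_succ]

lemma rpow_fin_sum {q : ℝ} (hq : 0 < q) {r : ℕ} (f : Fin r → ℝ) :
    q ^ (∑ i, f i) = ∏ i, q ^ f i := by
  rw [Real.rpow_def_of_pos hq, mul_sum, Real.exp_sum]
  exact Finset.prod_congr rfl fun i _ => (Real.rpow_def_of_pos hq (f i)).symm

lemma term_expand {r : ℕ} (n : ℕ) {q : ℝ} (hq0 : 0 < q) (x : ℝ) (w : Fin r → ℝ)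
    (z : ℝ) (m : Fin r → ℕ) :
    (-1 : ℝ) ^ (∑ i, m i) * z ^ (∑ i, m i) * qnum q (x + ∑ i, w i * m i) ^ n
      = ∑ l ∈ range (n + 1), ((n.choose l : ℝ) * (-(q ^ x)) ^ l / (1 - q) ^ n) *
          ∏ i, (-(z * q ^ ((l : ℝ) * w i))) ^ (m i) := by
  set S : ℝ := ∑ i, w i * m i with hS
  have hA : q ^ (x + S) = q ^ x * q ^ S := Real.rpow_add hq0 _ _
  have hgeom : ∀ l : ℕ, ∀ i : Fin r, (q ^ ((l : ℝ) * w i)) ^ (m i) = q ^ ((l : ℝ) * (w i * m i)) := by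
    intro l i
    rw [← Real.rpow_natCast (q ^ ((l : ℝ) * w i)) (m i), ← Real.rpow_mul hq0.le, mul_assoc]
  have hprod : ∀ l : ℕ, ∏ i, (-(z * q ^ ((l : ℝ) * w i))) ^ (m i)
      = (-1 : ℝ) ^ (∑ i, m i) * z ^ (∑ i, m i) * q ^ ((l : ℝ) * S) := by
    intro l
    have h1 : ∀ i : Fin r, (-(z * q ^ ((l : ℝ) * w i))) ^ (m i)
        = (-1 : ℝ) ^ (m i) * z ^ (m i) * (q ^ ((l : ℝ) * w i)) ^ (m i) := by
      intro i; rw [← neg_one_mul, mul_pow, mul_pow, mul_assoc]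
    rw [Finset.prod_congr rfl fun i _ => h1 i]
    rw [Finset.prod_mul_distrib, Finset.prod_mul_distrib, Finset.prod_pow_eq_pow_sum,
      Finset.prod_pow_eq_pow_sum]
    congr 1
    rw [Finset.prod_congr rfl fun i _ => hgeom l i, ← rpow_fin_sum hq0, ← Finset.mul_sum]
  have hSl : ∀ l : ℕ, (q ^ S) ^ l = q ^ ((l : ℝ) * S) := by
    intro l
    rw [← Real.rpow_natCast (q ^ S) l, ← Real.rpow_mul hq0.le, mul_comm]
  have hqpow : qnum q (x + S) ^ n
      = (∑ l ∈ range (n + 1), (-(q ^ (x + S))) ^ l * 1 ^ (n - l) * (n.choose l : ℝ)) / (1 - q) ^ n := by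
    rw [qnum, div_pow, sub_eq_neg_add, add_pow]
  rw [hqpow, Finset.sum_div, Finset.mul_sum]
  refine Finset.sum_congr rfl fun l _ => ?_
  rw [hprod l, hA, neg_mul_eq_neg_mul, mul_pow, hSl l, one_pow]
  ring

lemma geom_abs_summable {r : ℕ} {q : ℝ} (hq0 : 0 < q) (hq1 : q < 1) (w : Fin r → ℝ)
    (hw : ∀ i, 0 < w i) {z : ℝ} (hz : |z| < 1) (l : ℕ) (i : Fin r) :
    Summable fun k : ℕ => |(-(z * q ^ ((l : ℝ) * w i))) ^ k| := by
  have hqp0 : 0 < q ^ ((l : ℝ) * w i) := Real.rpow_pos_of_pos hq0 _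
  have hqp1 : q ^ ((l : ℝ) * w i) ≤ 1 :=
    Real.rpow_le_one hq0.le hq1.le (mul_nonneg (Nat.cast_nonneg l) (hw i).le)
  have hb : |z * q ^ ((l : ℝ) * w i)| < 1 := by
    rw [abs_mul, abs_of_pos hqp0]
    calc |z| * q ^ ((l : ℝ) * w i) ≤ |z| * 1 := by
          exact mul_le_mul_of_nonneg_left hqp1 (abs_nonneg z)
      _ = |z| := mul_one _
      _ < 1 := hz
  refine (summable_geometric_of_lt_one (abs_nonneg _) hb).congr fun k => ?_
  rw [abs_pow, abs_neg]

lemma tsum_eval {r : ℕ} (n : ℕ) {q : ℝ} (hq0 : 0 < q) (hq1 : q < 1) (x : ℝ) (w : Fin r → ℝ)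
    (hw : ∀ i, 0 < w i) {z : ℝ} (hz : |z| < 1) :
    ∑' m : Fin r → ℕ, (-1 : ℝ) ^ (∑ i, m i) * z ^ (∑ i, m i) * qnum q (x + ∑ i, w i * m i) ^ n
      = ∑ l ∈ range (n + 1), ((n.choose l : ℝ) * (-(q ^ x)) ^ l / (1 - q) ^ n) *
          ∏ i, (1 + z * q ^ ((l : ℝ) * w i))⁻¹ := by
  have habs := geom_abs_summable hq0 hq1 w hw hz
  have hps := fun l : ℕ => pi_tsum_prod
    (fun i k => (-(z * q ^ ((l : ℝ) * w i))) ^ k) (habs l)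
  rw [tsum_congr (fun m => term_expand n hq0 x w z m)]
  rw [Summable.tsum_finsetSum (fun l _ => Summable.mul_left _ ((hps l).1.of_abs))]
  refine Finset.sum_congr rfl fun l _ => ?_
  rw [tsum_mul_left, (hps l).2]
  congr 1
  refine Finset.prod_congr rfl fun i _ => ?_
  have hqp0 : 0 < q ^ ((l : ℝ) * w i) := Real.rpow_pos_of_pos hq0 _
  have hqp1 : q ^ ((l : ℝ) * w i) ≤ 1 :=
    Real.rpow_le_one hq0.le hq1.le (mul_nonneg (Nat.cast_nonneg l) (hw i).le)
  have hb : ‖-(z * q ^ ((l : ℝ) * w i))‖ < 1 := by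
    rw [norm_neg, Real.norm_eq_abs, abs_mul, abs_of_pos hqp0]
    nlinarith [abs_nonneg z]
  rw [tsum_geometric_of_norm_lt_one hb, sub_neg_eq_add]

theorem stmt_6 (r n : ℕ) (hr : 1 ≤ r) (q : ℝ) (hq0 : 0 < q) (hq1 : q < 1) (x : ℝ)
    (w : Fin r → ℝ) (hw : ∀ i, 0 < w i) :
    (∀ z : ℝ, 0 ≤ z → z < 1 →
      Summable (fun m : Fin r → ℕ =>
        |(-1 : ℝ) ^ (∑ i, m i) * z ^ (∑ i, m i) * qnum q (x + ∑ i, w i * m i) ^ n|)) ∧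
    Tendsto (fun z : ℝ => (2 : ℝ) ^ r *
        ∑' m : Fin r → ℕ,
          (-1 : ℝ) ^ (∑ i, m i) * z ^ (∑ i, m i) * qnum q (x + ∑ i, w i * m i) ^ n)
      (nhdsWithin 1 (Set.Iio 1))
      (nhds ((2 : ℝ) ^ r / (1 - q) ^ n *
        ∑ l ∈ range (n + 1),
          (n.choose l : ℝ) * (-(q ^ x)) ^ l / ∏ i, (1 + q ^ ((l : ℝ) * w i)))) := by
  constructor
  · intro z hz0 hz1
    have hgz : Summable fun m : Fin r → ℕ => |∏ i, z ^ (m i)| :=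
      (pi_tsum_prod (fun _ k => z ^ k) (fun i =>
        (summable_geometric_of_lt_one hz0 hz1).congr
          fun k => (abs_of_nonneg (pow_nonneg hz0 k)).symm)).1
    set C : ℝ := (1 + q ^ x) / (1 - q) with hCdef
    refine Summable.of_nonneg_of_le (fun m => abs_nonneg _) (fun m => ?_)
      (hgz.mul_right (C ^ n))
    have hS : (0:ℝ) ≤ ∑ i, w i * m i :=
      Finset.sum_nonneg fun i _ => mul_nonneg (hw i).le (Nat.cast_nonneg _)
    have hqle : |qnum q (x + ∑ i, w i * m i)| ≤ C := by
      have h1 : q ^ (x + ∑ i, w i * (m i : ℝ)) ≤ q ^ x :=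
        Real.rpow_le_rpow_of_exponent_ge hq0 hq1.le (le_add_of_nonneg_right hS)
      have h2 : 0 < q ^ (x + ∑ i, w i * (m i : ℝ)) := Real.rpow_pos_of_pos hq0 _
      rw [qnum, abs_div, abs_of_pos (by linarith : (0:ℝ) < 1 - q), hCdef]
      have habs : |1 - q ^ (x + ∑ i, w i * (m i : ℝ))| ≤ 1 + q ^ x :=
        abs_le.mpr ⟨by linarith, by linarith⟩
      exact div_le_div_of_nonneg_right habs (by linarith)
    have e1 : |(-1:ℝ) ^ (∑ i, m i) * z ^ (∑ i, m i) * qnum q (x + ∑ i, w i * m i) ^ n|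
        = z ^ (∑ i, m i) * |qnum q (x + ∑ i, w i * m i)| ^ n := by
      rw [abs_mul, abs_mul, abs_pow, abs_pow, abs_neg, abs_one, one_pow, one_mul, abs_pow,
        abs_of_nonneg hz0]
    have e2 : |∏ i, z ^ (m i)| = z ^ (∑ i, m i) := by
      rw [abs_of_nonneg (Finset.prod_nonneg fun i _ => pow_nonneg hz0 _),
        Finset.prod_pow_eq_pow_sum]
    rw [e1, e2]
    exact mul_le_mul_of_nonneg_left (pow_le_pow_left₀ (abs_nonneg _) hqle n)
      (pow_nonneg hz0 _)
  · set T : ℝ → ℝ := fun z => ∑ l ∈ range (n + 1),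
      ((n.choose l : ℝ) * (-(q ^ x)) ^ l / (1 - q) ^ n) *
        ∏ i, (1 + z * q ^ ((l : ℝ) * w i))⁻¹ with hT
    have hA : (2:ℝ)^r * T 1 = (2:ℝ)^r / (1-q)^n *
        ∑ l ∈ range (n+1), (n.choose l : ℝ) * (-(q ^ x)) ^ l /
          ∏ i, (1 + q ^ ((l : ℝ) * w i)) := by
      rw [hT, Finset.mul_sum, Finset.mul_sum]
      refine Finset.sum_congr rfl fun l _ => ?_
      simp only [one_mul]
      rw [Finset.prod_inv_distrib, div_eq_mul_inv, div_eq_mul_inv, div_eq_mul_inv]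
      ring
    have hB : Tendsto (fun z => (2:ℝ)^r * T z) (nhdsWithin 1 (Set.Iio 1))
        (nhds ((2:ℝ)^r * T 1)) := by
      refine Tendsto.const_mul _ ?_
      rw [hT]
      refine tendsto_finset_sum _ fun l _ => ?_
      refine Tendsto.const_mul _ ?_
      refine tendsto_finset_prod _ fun i _ => ?_
      have hqp : 0 < q ^ ((l : ℝ) * w i) := Real.rpow_pos_of_pos hq0 _
      have hpos : (0:ℝ) ≠ 1 + 1 * q ^ ((l : ℝ) * w i) := by nlinarith
      exact Filter.Tendsto.inv₀
        (((continuous_const.add (continuous_id.mul continuous_const)).tendsto 1).mono_left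
          nhdsWithin_le_nhds) hpos.symm
    have hCeq : (fun z : ℝ => (2:ℝ)^r * T z) =ᶠ[nhdsWithin 1 (Set.Iio 1)]
        (fun z : ℝ => (2 : ℝ) ^ r * ∑' m : Fin r → ℕ,
          (-1 : ℝ) ^ (∑ i, m i) * z ^ (∑ i, m i) * qnum q (x + ∑ i, w i * m i) ^ n) := by
      have h1 : ∀ᶠ zz in nhdsWithin (1:ℝ) (Set.Iio 1), -1 < zz :=
        (eventually_gt_nhds (by norm_num : (-1:ℝ) < 1)).filter_mono nhdsWithin_le_nhds
      have h2 : ∀ᶠ zz in nhdsWithin (1:ℝ) (Set.Iio 1), zz < 1 :=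
        eventually_mem_nhdsWithin
      filter_upwards [h1, h2] with zz hzz1 hzz2
      rw [tsum_eval n hq0 hq1 x w hw (abs_lt.mpr ⟨hzz1, hzz2⟩), hT]
    have := hB.congr' hCeq
    rwa [hA] at this
end

section
/- Let f be an odd positive integer, χ a Dirichlet character modulo f, r ≥ 1 and n ≥ 0 integers, q real with 0 < q < 1, x a real number, w_1, …, w_r positive real numbers, and a_1, …, a_r positive real numbers. Then the multiple series 2^r Σ_{(m_1,…,m_r)∈ℕ^r} (∏_{j=1}^r χ(m_j)) (-1)^{m_1+⋯+m_r} q^{a_1 m_1 + ⋯ + a_r m_r} [x + w_1 m_1 + ⋯ + w_r m_r]_q^n converges absolutely and equals (2^r/(1-q)^n) Σ_{l=0}^n C(n,l)(-1)^l q^{lx} Σ_{(b_1,…,b_r)∈{0,…,f-1}^r} (∏_{i=1}^r χ(b_i)) (-1)^{b_1+⋯+b_r} q^{Σ_{i=1}^r (l w_i + a_i) b_i} / ∏_{j=1}^r (1 + q^{(l w_j + a_j) f}). -/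
open Finset

section aux

lemma summA {f : ℕ} (χ : DirichletCharacter ℂ f) {q c : ℝ} (hq0 : 0 < q) (hq1 : q < 1)
    (hc : 0 < c) :
    Summable (fun m : ℕ => ‖χ ((m : ℕ) : ZMod f) * (-1 : ℂ) ^ m * ((q ^ (c * m) : ℝ) : ℂ)‖) := by
  apply Summable.of_nonneg_of_le (fun m => norm_nonneg _) (fun m => ?_)
    (summable_geometric_of_lt_one (Real.rpow_nonneg hq0.le c)
      (Real.rpow_lt_one hq0.le hq1 hc))
  have h1 : ((q ^ c) ^ m : ℝ) = q ^ (c * m) := by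
    rw [← Real.rpow_natCast (q ^ c) m, ← Real.rpow_mul hq0.le]
  rw [norm_mul, norm_mul]
  calc ‖χ ((m : ℕ) : ZMod f)‖ * ‖(-1 : ℂ) ^ m‖ * ‖((q ^ (c * m) : ℝ) : ℂ)‖
      ≤ 1 * 1 * ‖((q ^ (c * m) : ℝ) : ℂ)‖ := by
        gcongr
        · exact χ.norm_le_one _
        · rw [norm_pow, norm_neg, norm_one, one_pow]
    _ = (q ^ c) ^ m := by
        rw [one_mul, one_mul, Complex.norm_real, Real.norm_eq_abs, h1,
          abs_of_nonneg (Real.rpow_nonneg hq0.le _)]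

lemma tsumB {f : ℕ} (hf : 0 < f) (hfodd : Odd f) (χ : DirichletCharacter ℂ f)
    {q c : ℝ} (hq0 : 0 < q) (hq1 : q < 1) (hc : 0 < c) :
    ∑' m : ℕ, χ ((m : ℕ) : ZMod f) * (-1 : ℂ) ^ m * ((q ^ (c * m) : ℝ) : ℂ)
      = (∑ b : Fin f, χ ((b : ℕ) : ZMod f) * (-1 : ℂ) ^ (b : ℕ) * ((q ^ (c * b) : ℝ) : ℂ)) /
        ((1 + q ^ (c * f) : ℝ) : ℂ) := by
  classical
  have hcf : 0 < c * f := mul_pos hc (by exact_mod_cast hf)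
  have hqcf1 : q ^ (c * f) < 1 := Real.rpow_lt_one hq0.le hq1 hcf
  have hqcf0 : (0:ℝ) ≤ q ^ (c * f) := Real.rpow_nonneg hq0.le _
  let e : ℕ × Fin f ≃ ℕ :=
  { toFun := fun p => p.1 * f + p.2
    invFun := fun m => (m / f, ⟨m % f, Nat.mod_lt _ hf⟩)
    left_inv := by
      rintro ⟨k, b⟩
      have h1 : (k * f + b) / f = k := by
        rw [mul_comm, Nat.mul_add_div hf, Nat.div_eq_of_lt b.isLt, add_zero]
      have h2 : (k * f + b) % f = (b : ℕ) := by
        rw [mul_comm, Nat.mul_add_mod, Nat.mod_eq_of_lt b.isLt]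
      exact Prod.ext h1 (Fin.ext h2)
    right_inv := by
      intro m
      simp only
      rw [mul_comm, Nat.div_add_mod] }
  set u : ℕ → ℂ := fun k => (-(((q ^ (c * f) : ℝ)) : ℂ)) ^ k with hu
  set v : Fin f → ℂ := fun b => χ ((b : ℕ) : ZMod f) * (-1 : ℂ) ^ (b : ℕ) *
    ((q ^ (c * b) : ℝ) : ℂ) with hv
  have hterm : ∀ p : ℕ × Fin f,
      χ (((e p : ℕ)) : ZMod f) * (-1 : ℂ) ^ (e p : ℕ) * ((q ^ (c * (e p : ℕ)) : ℝ) : ℂ)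
        = u p.1 * v p.2 := by
    rintro ⟨k, b⟩
    have hme : (e (k, b) : ℕ) = k * f + (b : ℕ) := rfl
    have hχ : (((e (k, b) : ℕ)) : ZMod f) = ((b : ℕ) : ZMod f) := by
      rw [hme]; push_cast; simp
    have hsgn : (-1 : ℂ) ^ (e (k, b) : ℕ) = (-1) ^ k * (-1) ^ (b : ℕ) := by
      rw [hme, pow_add, mul_comm k f, pow_mul, hfodd.neg_one_pow]
    have hrq : (q ^ (c * (e (k, b) : ℕ)) : ℝ) = (q ^ (c * f)) ^ k * q ^ (c * (b : ℕ)) := by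
      rw [hme]
      push_cast
      rw [mul_add, Real.rpow_add hq0, ← Real.rpow_natCast (q ^ (c * f)) k,
        ← Real.rpow_mul hq0.le]
      ring_nf
    rw [hχ, hsgn, hrq, hu, hv]
    push_cast
    rw [neg_pow]
    ring
  have hunorm : ‖-(((q ^ (c * f) : ℝ)) : ℂ)‖ < 1 := by
    rw [norm_neg, Complex.norm_real, Real.norm_eq_abs, abs_of_nonneg hqcf0]
    exact hqcf1
  have hus : Summable u := summable_geometric_of_norm_lt_one hunorm
  have hvs : Summable v := Summable.of_finite
  rw [← e.tsum_eq (fun m : ℕ => χ ((m : ℕ) : ZMod f) * (-1 : ℂ) ^ m * ((q ^ (c * m) : ℝ) : ℂ))]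
  rw [tsum_congr hterm, ← Summable.tsum_mul_tsum hus hvs
    (summable_mul_of_summable_norm (summable_norm_iff.mpr hus) (summable_norm_iff.mpr hvs))]
  have h1 : ∑' k : ℕ, u k = (1 + ((q ^ (c * f) : ℝ) : ℂ))⁻¹ := by
    rw [hu, tsum_geometric_of_norm_lt_one hunorm, sub_neg_eq_add]
  have h2 : ∑' b : Fin f, v b = ∑ b : Fin f, v b := tsum_fintype v
  rw [h1, h2, hv]
  push_cast
  rw [div_eq_mul_inv, mul_comm]

lemma piFac : ∀ (r : ℕ) (g : Fin r → ℕ → ℂ), (∀ i, Summable fun m => ‖g i m‖) →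
    Summable (fun m : Fin r → ℕ => ‖∏ i, g i (m i)‖) ∧
    ∑' m : Fin r → ℕ, ∏ i, g i (m i) = ∏ i, ∑' m : ℕ, g i m := by
  intro r
  induction r with
  | zero =>
    intro g hg
    constructor
    · refine ((hasSum_single (f := fun _ : Fin 0 → ℕ => ‖(1:ℂ)‖) default
        (fun b hb => absurd (Subsingleton.elim b default) hb)).summable).congr fun m => ?_
      simp
    · rw [tsum_eq_single default (fun b hb => absurd (Subsingleton.elim b default) hb)]
      simp
  | succ r ih =>
    intro g hg
    obtain ⟨ihs', iht'⟩ := ih (fun i => g i.succ) (fun i => hg i.succ)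
    have ihs : Summable (fun m : Fin r → ℕ => ‖∏ i : Fin r, g i.succ (m i)‖) := ihs'
    have iht : ∑' m : Fin r → ℕ, ∏ i : Fin r, g i.succ (m i)
        = ∏ i : Fin r, ∑' m : ℕ, g i.succ m := iht'
    let e : ℕ × (Fin r → ℕ) ≃ (Fin (r + 1) → ℕ) := Fin.consEquiv fun _ => ℕ
    have hterm : ∀ p : ℕ × (Fin r → ℕ),
        ∏ i, g i (e p i) = g 0 p.1 * ∏ i : Fin r, g i.succ (p.2 i) := by
      rintro ⟨k, m⟩
      rw [Fin.prod_univ_succ]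
      simp [e, Fin.consEquiv]
    have hmuln : Summable fun p : ℕ × (Fin r → ℕ) =>
        ‖g 0 p.1 * ∏ i : Fin r, g i.succ (p.2 i)‖ :=
      ((hg 0).mul_of_nonneg ihs (fun m => norm_nonneg _)
        (fun m => norm_nonneg _)).of_nonneg_of_le
        (fun p => norm_nonneg _) (fun p => norm_mul_le _ _)
    constructor
    · rw [← e.summable_iff]
      refine hmuln.congr fun p => ?_
      simp only [Function.comp_apply, hterm p]
    · rw [← e.tsum_eq, tsum_congr hterm,
        ← Summable.tsum_mul_tsum ((hg 0).of_norm) (ihs.of_norm)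
          hmuln.of_norm,
        iht, Fin.prod_univ_succ]

lemma one_sub_pow_eq (t : ℝ) (n : ℕ) :
    (1 - t) ^ n = ∑ l ∈ range (n + 1), (n.choose l : ℝ) * (-1) ^ l * t ^ l := by
  rw [sub_eq_neg_add, add_pow]
  refine Finset.sum_congr rfl fun l hl => ?_
  rw [neg_pow, one_pow]
  ring

lemma qnum_pow {q : ℝ} (hq0 : 0 < q) (y : ℝ) (n : ℕ) :
    qnum q y ^ n = ∑ l ∈ range (n + 1),
      (n.choose l : ℝ) * (-1) ^ l * q ^ ((l : ℝ) * y) * ((1 - q)⁻¹) ^ n := by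
  unfold qnum
  rw [div_pow, one_sub_pow_eq, Finset.sum_div]
  refine Finset.sum_congr rfl fun l hl => ?_
  rw [← Real.rpow_natCast (q ^ y) l, ← Real.rpow_mul hq0.le, mul_comm y (l : ℝ),
    div_eq_mul_inv, inv_pow]

lemma prodG {r f : ℕ} (χ : DirichletCharacter ℂ f) {q : ℝ} (hq0 : 0 < q)
    (c : Fin r → ℝ) (m : Fin r → ℕ) :
    ∏ j, (χ ((m j : ℕ) : ZMod f) * (-1 : ℂ) ^ (m j) * ((q ^ (c j * m j) : ℝ) : ℂ))
      = (∏ j, χ ((m j : ℕ) : ZMod f)) * (-1 : ℂ) ^ (∑ j, m j) *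
        ((q ^ (∑ j, c j * m j) : ℝ) : ℂ) := by
  rw [Finset.prod_mul_distrib, Finset.prod_mul_distrib, Finset.prod_pow_eq_pow_sum,
    Real.rpow_sum_of_pos hq0, Complex.ofReal_prod]

end aux

theorem stmt_8 (f : ℕ) (hf : 0 < f) (hfodd : Odd f) (χ : DirichletCharacter ℂ f)
    (r n : ℕ) (hr : 1 ≤ r) (q : ℝ) (hq0 : 0 < q) (hq1 : q < 1) (x : ℝ)
    (w a : Fin r → ℝ) (hw : ∀ i, 0 < w i) (ha : ∀ i, 0 < a i) :
    Summable (fun m : Fin r → ℕ =>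
      ‖(∏ j, χ ((m j : ℕ) : ZMod f)) * (-1 : ℂ) ^ (∑ j, m j) *
        ((q ^ (∑ i, a i * m i) : ℝ) : ℂ) * ((qnum q (x + ∑ i, w i * m i) ^ n : ℝ) : ℂ)‖) ∧
    (2 : ℂ) ^ r * ∑' m : Fin r → ℕ,
        (∏ j, χ ((m j : ℕ) : ZMod f)) * (-1 : ℂ) ^ (∑ j, m j) *
          ((q ^ (∑ i, a i * m i) : ℝ) : ℂ) * ((qnum q (x + ∑ i, w i * m i) ^ n : ℝ) : ℂ) =
      (2 : ℂ) ^ r / ((1 : ℂ) - (q : ℂ)) ^ n *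
        ∑ l ∈ range (n + 1),
          (n.choose l : ℂ) * (-1) ^ l * ((q ^ ((l : ℝ) * x) : ℝ) : ℂ) *
            ∑ b : Fin r → Fin f,
              (∏ i, χ ((b i : ℕ) : ZMod f)) * (-1 : ℂ) ^ (∑ i, (b i : ℕ)) *
                ((q ^ (∑ i, ((l : ℝ) * w i + a i) * (b i : ℕ)) : ℝ) : ℂ) /
                  ∏ j, (((1 + q ^ (((l : ℝ) * w j + a j) * f) : ℝ)) : ℂ) := by
  classical
  -- coefficients and one-variable pieces
  set c : ℕ → Fin r → ℝ := fun l j => (l : ℝ) * w j + a j with hc_def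
  have hc : ∀ (l : ℕ) (j : Fin r), 0 < c l j := fun l j =>
    add_pos_of_nonneg_of_pos (mul_nonneg (Nat.cast_nonneg l) (hw j).le) (ha j)
  set G : ℕ → Fin r → ℕ → ℂ := fun l j m =>
    χ ((m : ℕ) : ZMod f) * (-1 : ℂ) ^ m * ((q ^ (c l j * m) : ℝ) : ℂ) with hG_def
  have hGsum : ∀ (l : ℕ) (j : Fin r), Summable fun m : ℕ => ‖G l j m‖ := fun l j =>
    summA χ hq0 hq1 (hc l j)
  have hfac : ∀ l : ℕ, Summable (fun m : Fin r → ℕ => ‖∏ j, G l j (m j)‖) ∧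
      ∑' m : Fin r → ℕ, ∏ j, G l j (m j) = ∏ j, ∑' m : ℕ, G l j m := fun l =>
    piFac r (G l) (hGsum l)
  set coef : ℕ → ℂ := fun l => (n.choose l : ℂ) * (-1) ^ l * ((q ^ ((l : ℝ) * x) : ℝ) : ℂ) *
    (((1 - q)⁻¹ ^ n : ℝ) : ℂ) with hcoef_def
  -- the key pointwise identity
  have hkey : ∀ m : Fin r → ℕ,
      (∏ j, χ ((m j : ℕ) : ZMod f)) * (-1 : ℂ) ^ (∑ j, m j) *
        ((q ^ (∑ i, a i * m i) : ℝ) : ℂ) * ((qnum q (x + ∑ i, w i * m i) ^ n : ℝ) : ℂ)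
      = ∑ l ∈ range (n + 1), coef l * ∏ j, G l j (m j) := by
    intro m
    rw [qnum_pow hq0]
    push_cast
    rw [Finset.mul_sum]
    refine Finset.sum_congr rfl fun l hl => ?_
    have hprod : ∏ j, G l j (m j)
        = (∏ j, χ ((m j : ℕ) : ZMod f)) * (-1 : ℂ) ^ (∑ j, m j) *
          ((q ^ (∑ j, c l j * m j) : ℝ) : ℂ) := prodG χ hq0 (c l) m
    have hexpR : q ^ ((l : ℝ) * (x + ∑ i, w i * m i)) * q ^ (∑ i, a i * (m i : ℝ)) =
        q ^ ((l : ℝ) * x) * q ^ (∑ j, c l j * (m j : ℝ)) := by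
      rw [← Real.rpow_add hq0, ← Real.rpow_add hq0]
      congr 1
      rw [hc_def]
      simp only [add_mul, Finset.sum_add_distrib, mul_add, Finset.mul_sum]
      ring_nf
    have hexp : ((q ^ ((l : ℝ) * (x + ∑ i, w i * m i)) : ℝ) : ℂ) *
          ((q ^ (∑ i, a i * (m i : ℝ)) : ℝ) : ℂ)
        = ((q ^ ((l : ℝ) * x) : ℝ) : ℂ) * ((q ^ (∑ j, c l j * (m j : ℝ)) : ℝ) : ℂ) := by
      rw [← Complex.ofReal_mul, ← Complex.ofReal_mul, hexpR]
    rw [hprod, hcoef_def]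
    push_cast
    linear_combination ((∏ j, χ ((m j : ℕ) : ZMod f)) * (-1 : ℂ) ^ (∑ j, m j) *
      (n.choose l : ℂ) * (-1 : ℂ) ^ l * ((1 - (q : ℂ))⁻¹) ^ n) * hexp
  -- summability of each summand family
  have hsummand : ∀ l ∈ range (n + 1),
      Summable (fun m : Fin r → ℕ => ‖coef l * ∏ j, G l j (m j)‖) := fun l _ =>
    ((hfac l).1.mul_left ‖coef l‖).congr fun m => (norm_mul _ _).symm
  constructor
  · refine Summable.of_nonneg_of_le (fun m => norm_nonneg _) (fun m => ?_)
      (summable_sum hsummand)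
    rw [hkey m]
    exact norm_sum_le _ _
  · rw [tsum_congr hkey, Summable.tsum_finsetSum (fun l hl => ((hfac l).1.of_norm.mul_left (coef l)))]
    rw [Finset.mul_sum, Finset.mul_sum]
    refine Finset.sum_congr rfl fun l hl => ?_
    rw [tsum_mul_left, (hfac l).2]
    -- evaluate each one-dimensional sum
    have hone : ∀ j : Fin r, ∑' m : ℕ, G l j m
        = (∑ b : Fin f, χ ((b : ℕ) : ZMod f) * (-1 : ℂ) ^ (b : ℕ) *
            ((q ^ (c l j * b) : ℝ) : ℂ)) / ((1 + q ^ (c l j * f) : ℝ) : ℂ) := fun j =>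
      tsumB hf hfodd χ hq0 hq1 (hc l j)
    rw [Finset.prod_congr rfl (fun j _ => hone j), Finset.prod_div_distrib]
    have hps : (∏ j, ∑ b : Fin f, χ ((b : ℕ) : ZMod f) * (-1 : ℂ) ^ (b : ℕ) *
          ((q ^ (c l j * b) : ℝ) : ℂ))
        = ∑ b : Fin r → Fin f, (∏ i, χ ((b i : ℕ) : ZMod f)) * (-1 : ℂ) ^ (∑ i, (b i : ℕ)) *
            ((q ^ (∑ i, c l i * (b i : ℕ)) : ℝ) : ℂ) := by
      rw [Finset.prod_univ_sum]
      rw [Fintype.piFinset_univ]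
      refine Finset.sum_congr rfl fun b hb => ?_
      exact prodG χ hq0 (c l) (fun i => (b i : ℕ))
    rw [hps]
    have hc_unfold : ∀ j : Fin r, c l j = (l : ℝ) * w j + a j := fun j => rfl
    simp only [hc_unfold]
    rw [← Finset.sum_div]
    rw [hcoef_def]
    push_cast
    ring
end

section
/- Let r ≥ 1 be an integer, q real with 0 < q < 1, x, w_1, …, w_r positive real numbers, and a_1, …, a_r positive real numbers. Then for every complex number s with Re(s) > 0, the Mellin transform identity (1/Γ(s)) ∫_0^∞ t^{s-1} ( 2^r Σ_{(m_1,…,m_r)∈ℕ^r} (-1)^{m_1+⋯+m_r} q^{a_1 m_1 + ⋯ + a_r m_r} e^{-[x + w_1 m_1 + ⋯ + w_r m_r]_q · t} ) dt = 2^r Σ_{(m_1,…,m_r)∈ℕ^r} (-1)^{m_1+⋯+m_r} q^{a_1 m_1 + ⋯ + a_r m_r} [x + w_1 m_1 + ⋯ + w_r m_r]_q^{-s} holds, both series converging absolutely and the integral converging. -/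
open Finset MeasureTheory

open Set Filter

/-- Summability of products over Pi types of `Fin r`. -/
lemma summable_pi_prod : ∀ (r : ℕ) (f : Fin r → ℕ → ℝ),
    (∀ i, Summable (f i)) → (∀ i n, 0 ≤ f i n) →
    Summable (fun m : Fin r → ℕ => ∏ i, f i (m i))
  | 0, f, _, _ => by
      simp only [Finset.univ_eq_empty, Finset.prod_empty]
      exact Summable.of_finite
  | (n+1), f, hf, hnn => by
      have ih := summable_pi_prod n (fun i => f i.succ) (fun i => hf _) (fun i k => hnn _ _)
      have h := (hf 0).mul_of_nonneg ih (fun k => hnn 0 k)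
        (fun m => Finset.prod_nonneg fun i _ => hnn _ _)
      rw [← (Fin.consEquiv (fun _ : Fin (n+1) => ℕ)).summable_iff]
      refine h.congr fun p => ?_
      simp [Fin.consEquiv, Fin.prod_univ_succ]

/-- Main Mellin-transform engine, abstract version. -/
lemma mellin_tsum_exp {ι : Type*} [Countable ι] (A : ι → ℂ) (c : ι → ℝ) (c₀ : ℝ)
    (hc₀ : 0 < c₀) (hc : ∀ m, c₀ ≤ c m) (hA : Summable fun m => ‖A m‖)
    (s : ℂ) (hs : 0 < s.re) :
    (∀ t : ℝ, 0 < t → Summable fun m => ‖A m * Complex.exp (-((c m : ℝ) : ℂ) * t)‖) ∧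
    Summable (fun m => ‖A m * ((c m : ℝ) : ℂ) ^ (-s)‖) ∧
    IntegrableOn (fun t : ℝ => (t : ℂ) ^ (s - 1) *
      ∑' m, A m * Complex.exp (-((c m : ℝ) : ℂ) * t)) (Set.Ioi 0) ∧
    (1 / Complex.Gamma s) * ∫ t in Set.Ioi (0 : ℝ), (t : ℂ) ^ (s - 1) *
        ∑' m, A m * Complex.exp (-((c m : ℝ) : ℂ) * t)
      = ∑' m, A m * ((c m : ℝ) : ℂ) ^ (-s) := by
  have hcpos : ∀ m, 0 < c m := fun m => hc₀.trans_le (hc m)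
  have hnorm : ∀ (m : ι) (t : ℝ),
      ‖A m * Complex.exp (-((c m : ℝ) : ℂ) * t)‖ = ‖A m‖ * Real.exp (-(c m * t)) := by
    intro m t
    rw [norm_mul, Complex.norm_exp]
    congr 2
    simp
  -- first bullet
  have S1 : ∀ t : ℝ, 0 < t →
      Summable fun m => ‖A m * Complex.exp (-((c m : ℝ) : ℂ) * t)‖ := by
    intro t ht
    refine Summable.of_nonneg_of_le (fun m => norm_nonneg _) (fun m => ?_) hA
    rw [hnorm]
    calc ‖A m‖ * Real.exp (-(c m * t)) ≤ ‖A m‖ * 1 := by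
          refine mul_le_mul_of_nonneg_left ?_ (norm_nonneg _)
          rw [← Real.exp_zero]
          exact Real.exp_le_exp.mpr (by nlinarith [hcpos m])
      _ = ‖A m‖ := mul_one _
  -- second bullet
  have S2 : Summable (fun m => ‖A m * ((c m : ℝ) : ℂ) ^ (-s)‖) := by
    refine Summable.of_nonneg_of_le (fun m => norm_nonneg _) (fun m => ?_)
      (hA.mul_right (c₀ ^ (-s.re)))
    rw [norm_mul, Complex.norm_cpow_eq_rpow_re_of_pos (hcpos m)]
    refine mul_le_mul_of_nonneg_left ?_ (norm_nonneg _)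
    rw [Complex.neg_re]
    exact Real.rpow_le_rpow_of_nonpos hc₀ (hc m) (neg_nonpos.mpr hs.le)
  refine ⟨S1, S2, ?_, ?_⟩
  · -- integrability
    have key : IntegrableOn
        (fun t : ℝ => (t : ℂ) ^ (s - 1) * ((Real.exp (-(c₀ * t)) : ℝ) : ℂ)) (Set.Ioi 0) := by
      have h1 := Complex.GammaIntegral_convergent hs
      rw [← mul_zero c₀, ← integrableOn_Ioi_comp_mul_left_iff _ _ hc₀] at h1
      have hne : ((c₀ : ℂ)) ^ (s - 1) ≠ 0 := by
        rw [Ne, Complex.cpow_eq_zero_iff, not_and_or]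
        exact Or.inl (Complex.ofReal_ne_zero.mpr hc₀.ne')
      refine IntegrableOn.congr_fun (h1.const_mul ((1 : ℂ) / (c₀ : ℂ) ^ (s - 1)))
        (fun t ht => ?_) measurableSet_Ioi
      have ht : (0 : ℝ) < t := ht
      rw [Complex.ofReal_mul, Complex.mul_cpow_ofReal_nonneg hc₀.le ht.le]
      rw [Complex.ofReal_exp, Complex.ofReal_neg, Complex.ofReal_mul]
      field_simp
    have hmeas : AEStronglyMeasurable
        (fun t : ℝ => (t : ℂ) ^ (s - 1) * ∑' m, A m * Complex.exp (-((c m : ℝ) : ℂ) * t))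
        (volume.restrict (Set.Ioi 0)) := by
      refine AEStronglyMeasurable.mul ?_ ?_
      · refine ContinuousOn.aestronglyMeasurable ?_ measurableSet_Ioi
        refine continuousOn_of_forall_continuousAt (fun x hx => ?_)
        exact (continuousAt_cpow_const (Complex.ofReal_mem_slitPlane.2 hx)).comp
          Complex.continuous_ofReal.continuousAt
      · have hmS : ∀ S : Finset ι, AEStronglyMeasurable
            (fun t : ℝ => ∑ m ∈ S, A m * Complex.exp (-((c m : ℝ) : ℂ) * t))
            (volume.restrict (Set.Ioi 0)) := by
          intro S
          refine Finset.aestronglyMeasurable_fun_sum _ (fun m _ => ?_)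
          exact (((Complex.measurable_ofReal.const_mul (-((c m : ℝ) : ℂ))).cexp).const_mul
            (A m)).aestronglyMeasurable
        refine aestronglyMeasurable_of_tendsto_ae (atTop : Filter (Finset ι)) hmS ?_
        filter_upwards [ae_restrict_mem measurableSet_Ioi] with t ht
        exact ((S1 t ht).of_norm).hasSum
    refine Integrable.mono' ((key.norm).const_mul (∑' m, ‖A m‖)) hmeas ?_
    filter_upwards [ae_restrict_mem measurableSet_Ioi] with t ht
    have ht : (0 : ℝ) < t := ht
    rw [norm_mul]
    have h2 : ‖∑' m, A m * Complex.exp (-((c m : ℝ) : ℂ) * t)‖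
        ≤ (∑' m, ‖A m‖) * Real.exp (-(c₀ * t)) := by
      refine (norm_tsum_le_tsum_norm (S1 t ht)).trans ?_
      rw [← tsum_mul_right]
      refine Summable.tsum_le_tsum (fun m => ?_) (S1 t ht) (hA.mul_right _)
      rw [hnorm]
      refine mul_le_mul_of_nonneg_left (Real.exp_le_exp.mpr ?_) (norm_nonneg _)
      nlinarith [hc m]
    calc ‖(t : ℂ) ^ (s - 1)‖ * ‖∑' m, A m * Complex.exp (-((c m : ℝ) : ℂ) * t)‖
        ≤ ‖(t : ℂ) ^ (s - 1)‖ * ((∑' m, ‖A m‖) * Real.exp (-(c₀ * t))) :=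
          mul_le_mul_of_nonneg_left h2 (norm_nonneg _)
      _ = (∑' m, ‖A m‖) * ‖(t : ℂ) ^ (s - 1) * ((Real.exp (-(c₀ * t)) : ℝ) : ℂ)‖ := by
          rw [norm_mul, Complex.norm_real, Real.norm_eq_abs, abs_of_pos (Real.exp_pos _)]
          ring
  · -- the identity
    have hp : ∀ m, A m = 0 ∨ 0 < c m := fun m => Or.inr (hcpos m)
    have h_sum : Summable fun m => ‖A m‖ / (c m) ^ s.re := by
      refine Summable.of_nonneg_of_le
        (fun m => div_nonneg (norm_nonneg _) (Real.rpow_nonneg (hcpos m).le _))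
        (fun m => ?_) (hA.mul_right (c₀ ^ s.re)⁻¹)
      rw [div_eq_mul_inv]
      refine mul_le_mul_of_nonneg_left ?_ (norm_nonneg _)
      refine inv_anti₀ (Real.rpow_pos_of_pos hc₀ _) ?_
      exact Real.rpow_le_rpow hc₀.le (hc m) hs.le
    have hF : ∀ t ∈ Set.Ioi (0 : ℝ), HasSum (fun m => A m * (Real.exp (-c m * t) : ℝ))
        (∑' m, A m * Complex.exp (-((c m : ℝ) : ℂ) * t)) := by
      intro t ht
      have : (fun m => A m * ((Real.exp (-c m * t) : ℝ) : ℂ))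
          = fun m => A m * Complex.exp (-((c m : ℝ) : ℂ) * t) := by
        funext m
        rw [Complex.ofReal_exp]
        push_cast
        ring_nf
      rw [this]
      exact ((S1 t ht).of_norm).hasSum
    have hHS := hasSum_mellin hp hs hF h_sum
    have hmellin : mellin (fun t => ∑' m, A m * Complex.exp (-((c m : ℝ) : ℂ) * t)) s
        = ∫ t in Set.Ioi (0 : ℝ), (t : ℂ) ^ (s - 1) *
          ∑' m, A m * Complex.exp (-((c m : ℝ) : ℂ) * t) := by
      simp [mellin, smul_eq_mul]
    rw [← hmellin, ← hHS.tsum_eq]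
    have hΓ : Complex.Gamma s ≠ 0 := Complex.Gamma_ne_zero_of_re_pos hs
    have : ∀ m, Complex.Gamma s * A m / (c m : ℂ) ^ s
        = Complex.Gamma s * (A m * ((c m : ℝ) : ℂ) ^ (-s)) := by
      intro m
      rw [Complex.cpow_neg, div_eq_mul_inv]
      ring
    simp_rw [this]
    rw [tsum_mul_left, ← mul_assoc, one_div, inv_mul_cancel₀ hΓ, one_mul]

theorem stmt_10 (r : ℕ) (hr : 1 ≤ r) (q : ℝ) (hq0 : 0 < q) (hq1 : q < 1)
    (x : ℝ) (hx : 0 < x) (w a : Fin r → ℝ) (hw : ∀ i, 0 < w i) (ha : ∀ i, 0 < a i)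
    (s : ℂ) (hs : 0 < s.re) :
    (∀ t : ℝ, 0 < t →
      Summable (fun m : Fin r → ℕ =>
        ‖(-1 : ℂ) ^ (∑ i, m i) * ((q ^ (∑ i, a i * m i) : ℝ) : ℂ) *
          Complex.exp (-(((qnum q (x + ∑ i, w i * m i) : ℝ) : ℂ)) * t)‖)) ∧
    Summable (fun m : Fin r → ℕ =>
      ‖(-1 : ℂ) ^ (∑ i, m i) * ((q ^ (∑ i, a i * m i) : ℝ) : ℂ) *
        ((qnum q (x + ∑ i, w i * m i) : ℝ) : ℂ) ^ (-s)‖) ∧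
    IntegrableOn (fun t : ℝ => (t : ℂ) ^ (s - 1) *
      ((2 : ℂ) ^ r * ∑' m : Fin r → ℕ,
        (-1 : ℂ) ^ (∑ i, m i) * ((q ^ (∑ i, a i * m i) : ℝ) : ℂ) *
          Complex.exp (-(((qnum q (x + ∑ i, w i * m i) : ℝ) : ℂ)) * t))) (Set.Ioi 0) ∧
    (1 / Complex.Gamma s) * ∫ t in Set.Ioi (0 : ℝ), (t : ℂ) ^ (s - 1) *
        ((2 : ℂ) ^ r * ∑' m : Fin r → ℕ,
          (-1 : ℂ) ^ (∑ i, m i) * ((q ^ (∑ i, a i * m i) : ℝ) : ℂ) *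
            Complex.exp (-(((qnum q (x + ∑ i, w i * m i) : ℝ) : ℂ)) * t)) =
      (2 : ℂ) ^ r * ∑' m : Fin r → ℕ,
        (-1 : ℂ) ^ (∑ i, m i) * ((q ^ (∑ i, a i * m i) : ℝ) : ℂ) *
          ((qnum q (x + ∑ i, w i * m i) : ℝ) : ℂ) ^ (-s) := by
  have hq1' : (0:ℝ) < 1 - q := by linarith
  have hqnum_pos : ∀ y : ℝ, 0 < y → 0 < qnum q y := by
    intro y hy
    have : q ^ y < 1 := Real.rpow_lt_one hq0.le hq1 hy
    exact div_pos (by linarith) hq1'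
  have hqnum_mono : ∀ {y z : ℝ}, y ≤ z → qnum q y ≤ qnum q z := by
    intro y z h
    have h2 : q ^ z ≤ q ^ y := Real.rpow_le_rpow_of_exponent_ge hq0 hq1.le h
    unfold qnum
    gcongr
  set A : (Fin r → ℕ) → ℂ := fun m =>
    (-1 : ℂ) ^ (∑ i, m i) * ((q ^ (∑ i, a i * m i) : ℝ) : ℂ) with hA_def
  set c : (Fin r → ℕ) → ℝ := fun m => qnum q (x + ∑ i, w i * m i) with hc_def
  have hsum_nonneg : ∀ m : Fin r → ℕ, 0 ≤ ∑ i, w i * (m i : ℝ) :=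
    fun m => Finset.sum_nonneg fun i _ => mul_nonneg (hw i).le (Nat.cast_nonneg _)
  have hc₀ : 0 < qnum q x := hqnum_pos x hx
  have hcm : ∀ m, qnum q x ≤ c m := fun m => hqnum_mono (by linarith [hsum_nonneg m])
  have hA_norm : ∀ m, ‖A m‖ = q ^ (∑ i, a i * (m i : ℝ)) := by
    intro m
    rw [hA_def, norm_mul, norm_pow, norm_neg, norm_one, one_pow, one_mul,
      Complex.norm_real, Real.norm_eq_abs, abs_of_pos (Real.rpow_pos_of_pos hq0 _)]
  have hA : Summable fun m => ‖A m‖ := by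
    have base := summable_pi_prod r (fun i k => (q ^ (a i)) ^ k)
      (fun i => summable_geometric_of_lt_one (Real.rpow_nonneg hq0.le _)
        (Real.rpow_lt_one hq0.le hq1 (ha i)))
      (fun i n => pow_nonneg (Real.rpow_nonneg hq0.le _) n)
    refine base.congr fun m => ?_
    rw [hA_norm, Real.rpow_sum_of_pos hq0]
    refine Finset.prod_congr rfl fun i _ => ?_
    show (q ^ a i) ^ (m i) = q ^ (a i * (m i : ℝ))
    rw [← Real.rpow_natCast (q ^ a i) (m i), ← Real.rpow_mul hq0.le]
  obtain ⟨B1, B2, B3, B4⟩ := mellin_tsum_exp A c (qnum q x) hc₀ hcm hA s hs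
  refine ⟨B1, B2, ?_, ?_⟩
  · refine IntegrableOn.congr_fun (B3.const_mul ((2:ℂ)^r)) (fun t _ => ?_) measurableSet_Ioi
    ring
  · have hrw : ∀ t : ℝ, (t : ℂ) ^ (s - 1) *
        ((2 : ℂ) ^ r * ∑' m, A m * Complex.exp (-((c m : ℝ) : ℂ) * t))
        = (2 : ℂ) ^ r * ((t : ℂ) ^ (s - 1) *
          ∑' m, A m * Complex.exp (-((c m : ℝ) : ℂ) * t)) := fun t => by ring
    calc (1 / Complex.Gamma s) * ∫ t in Set.Ioi (0 : ℝ), (t : ℂ) ^ (s - 1) *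
          ((2 : ℂ) ^ r * ∑' m, A m * Complex.exp (-((c m : ℝ) : ℂ) * t))
        = (1 / Complex.Gamma s) * ((2:ℂ)^r * ∫ t in Set.Ioi (0 : ℝ), (t : ℂ) ^ (s - 1) *
          ∑' m, A m * Complex.exp (-((c m : ℝ) : ℂ) * t)) := by
          have heq := setIntegral_congr_fun (μ := volume) measurableSet_Ioi
            (fun t (_ : t ∈ Set.Ioi (0:ℝ)) => hrw t)
          rw [heq, integral_const_mul]
      _ = (2:ℂ)^r * ((1 / Complex.Gamma s) * ∫ t in Set.Ioi (0 : ℝ), (t : ℂ) ^ (s - 1) *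
          ∑' m, A m * Complex.exp (-((c m : ℝ) : ℂ) * t)) := by ring
      _ = (2:ℂ)^r * ∑' m, A m * ((c m : ℝ) : ℂ) ^ (-s) := by rw [B4]
end

section
/- Let r ≥ 1 be an integer, q real with 0 < q < 1, x, w_1, …, w_r positive real numbers, and a_1, …, a_r positive real numbers. For s ∈ ℂ define the Barnes-type multiple q-zeta function ζ_{q,r}(s, x|w_1,…,w_r; a_1,…,a_r) = 2^r Σ_{(m_1,…,m_r)∈ℕ^r} (-1)^{m_1+⋯+m_r} q^{a_1 m_1 + ⋯ + a_r m_r} [x + w_1 m_1 + ⋯ + w_r m_r]_q^{-s}. Then this multiple series converges absolutely for every s ∈ ℂ, and for every integer n ≥ 0 one has ζ_{q,r}(-n, x|w_1,…,w_r; a_1,…,a_r) = E_{n,q}^{(r)}(x|w_1,…,w_r; a_1,…,a_r) = (2^r/(1-q)^n) Σ_{l=0}^n C(n,l)(-1)^l q^{lx} / ∏_{j=1}^r (1+q^{l w_j + a_j}). -/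
open Finset

private theorem pi_prod_hasSum : ∀ (r : ℕ) (f : Fin r → ℕ → ℝ),
    (∀ i, Summable fun m : ℕ => ‖f i m‖) →
    Summable (fun m : Fin r → ℕ => ‖∏ i : Fin r, f i (m i)‖) ∧
    HasSum (fun m : Fin r → ℕ => ∏ i : Fin r, f i (m i)) (∏ i : Fin r, ∑' m : ℕ, f i m) := by
  intro r
  induction r with
  | zero =>
      intro f _
      constructor
      · exact Summable.of_finite
      · simp only [Finset.univ_eq_empty, Finset.prod_empty]
        exact hasSum_single (fun _ => 0) (fun b hb => absurd (Subsingleton.elim _ _) hb)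
  | succ r IH =>
      intro f hf
      obtain ⟨IHs, IHh⟩ := IH (fun i => f i.succ) (fun i => hf i.succ)
      have h0 : Summable fun m : ℕ => ‖f 0 m‖ := hf 0
      have key : ∀ (F : ℕ → ℝ) (G : (Fin r → ℕ) → ℝ), Summable (fun n : ℕ => ‖F n‖) →
          Summable (fun m : Fin r → ℕ => ‖G m‖) →
          (Summable fun p : ℕ × (Fin r → ℕ) => ‖F p.1 * G p.2‖) ∧
          ∀ {S T : ℝ}, HasSum F S → HasSum G T →
            HasSum (fun p : ℕ × (Fin r → ℕ) => F p.1 * G p.2) (S * T) :=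
        fun F G hF hG => ⟨Summable.mul_norm hF hG,
          fun hS hT => HasSum.mul hS hT (Summable.mul_norm hF hG).of_norm⟩
      obtain ⟨hmulnorm, hmul⟩ := key (f 0) (fun m : Fin r → ℕ => ∏ i : Fin r, f i.succ (m i))
        h0 IHs
      have hmul2 := hmul h0.of_norm.hasSum IHh
      set e := Fin.consEquiv (fun _ : Fin (r+1) => ℕ) with he_def
      have he : ∀ p : ℕ × (Fin r → ℕ), (∏ i : Fin (r+1), f i (e (p.1, p.2) i))
          = f 0 p.1 * ∏ i : Fin r, f i.succ (p.2 i) := by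
        intro p
        rw [Fin.prod_univ_succ]
        simp [he_def, Fin.consEquiv]
      constructor
      · refine (e.summable_iff.mp ?_)
        refine hmulnorm.congr fun p => ?_
        simp only [Function.comp_apply]
        rw [← he p]
      · rw [Fin.prod_univ_succ]
        refine (e.hasSum_iff.mp ?_)
        refine (hmul2.congr_fun fun p => ?_)
        simp only [Function.comp_apply]
        rw [← he p]

private theorem geom_aux {c : ℝ} (h0 : 0 < c) (h1 : c < 1) :
    Summable (fun m : ℕ => ‖(-c) ^ m‖) ∧ ∑' m : ℕ, (-c) ^ m = (1 + c)⁻¹ := by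
  have hn : ‖(-c)‖ < 1 := by rwa [norm_neg, Real.norm_eq_abs, abs_of_pos h0]
  constructor
  · refine (summable_geometric_of_lt_one h0.le h1).congr fun m => ?_
    rw [norm_pow, norm_neg, Real.norm_eq_abs, abs_of_pos h0]
  · rw [tsum_geometric_of_norm_lt_one hn, sub_neg_eq_add]

private theorem rpow_sum_aux {q : ℝ} (hq : 0 < q) {ι : Type*} (s : Finset ι) (c : ι → ℝ) :
    q ^ (∑ i ∈ s, c i) = ∏ i ∈ s, q ^ c i := by
  rw [Real.rpow_def_of_pos hq, Finset.mul_sum, Real.exp_sum]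
  exact Finset.prod_congr rfl fun i _ => (Real.rpow_def_of_pos hq _).symm

private theorem sign_rpow_prod {q : ℝ} (hq : 0 < q) {r : ℕ} (d : Fin r → ℝ) (m : Fin r → ℕ) :
    (-1 : ℝ) ^ (∑ i : Fin r, m i) * q ^ (∑ i : Fin r, d i * (m i : ℝ))
      = ∏ i : Fin r, (-(q ^ d i)) ^ (m i) := by
  rw [rpow_sum_aux hq, ← Finset.prod_pow_eq_pow_sum, ← Finset.prod_mul_distrib]
  refine Finset.prod_congr rfl fun i _ => ?_
  rw [Real.rpow_mul hq.le, Real.rpow_natCast,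
    show (-(q ^ d i)) = (-1) * q ^ d i from by ring, mul_pow]

theorem stmt_11 (r : ℕ) (hr : 1 ≤ r) (q : ℝ) (hq0 : 0 < q) (hq1 : q < 1)
    (x : ℝ) (hx : 0 < x) (w a : Fin r → ℝ) (hw : ∀ i, 0 < w i) (ha : ∀ i, 0 < a i) :
    (∀ s : ℂ,
      Summable (fun m : Fin r → ℕ =>
        ‖(-1 : ℂ) ^ (∑ i, m i) * ((q ^ (∑ i, a i * m i) : ℝ) : ℂ) *
          ((qnum q (x + ∑ i, w i * m i) : ℝ) : ℂ) ^ (-s)‖)) ∧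
    ∀ n : ℕ,
      (2 : ℂ) ^ r * ∑' m : Fin r → ℕ,
          (-1 : ℂ) ^ (∑ i, m i) * ((q ^ (∑ i, a i * m i) : ℝ) : ℂ) *
            ((qnum q (x + ∑ i, w i * m i) : ℝ) : ℂ) ^ (-(-(n : ℂ))) =
        (((2 : ℝ) ^ r / (1 - q) ^ n *
          ∑ l ∈ range (n + 1),
            (n.choose l : ℝ) * (-1) ^ l * q ^ ((l : ℝ) * x) /
              ∏ j, (1 + q ^ ((l : ℝ) * w j + a j)) : ℝ) : ℂ) := by
  have h1q : 0 < 1 - q := by linarith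
  have hy : ∀ m : Fin r → ℕ, x ≤ x + ∑ i : Fin r, w i * (m i : ℝ) := by
    intro m
    have : (0:ℝ) ≤ ∑ i : Fin r, w i * (m i : ℝ) :=
      Finset.sum_nonneg fun i _ => mul_nonneg (hw i).le (Nat.cast_nonneg _)
    linarith
  have hApos : 0 < qnum q x := by
    have := Real.rpow_lt_one hq0.le hq1 hx
    exact div_pos (by linarith) h1q
  have hbound : ∀ y : ℝ, x ≤ y → qnum q x ≤ qnum q y ∧ qnum q y ≤ (1 - q)⁻¹ := by
    intro y hxy
    have h1 : q ^ y ≤ q ^ x := Real.rpow_le_rpow_of_exponent_ge hq0 hq1.le hxy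
    have h2 : 0 < q ^ y := Real.rpow_pos_of_pos hq0 _
    constructor
    · exact (div_le_div_iff_of_pos_right h1q).mpr (by linarith)
    · have : qnum q y ≤ 1 / (1 - q) := (div_le_div_iff_of_pos_right h1q).mpr (by linarith)
      simpa [one_div] using this
  have hgeo : ∀ d : Fin r → ℝ, (∀ i, 0 < d i) →
      Summable (fun m : Fin r → ℕ => ‖∏ i : Fin r, (-(q ^ d i)) ^ (m i)‖) ∧
      HasSum (fun m : Fin r → ℕ => ∏ i : Fin r, (-(q ^ d i)) ^ (m i))
        (∏ i : Fin r, (1 + q ^ d i)⁻¹) := by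
    intro d hd
    have hc : ∀ i : Fin r, 0 < q ^ d i := fun i => Real.rpow_pos_of_pos hq0 _
    have hc1 : ∀ i : Fin r, q ^ d i < 1 := fun i => Real.rpow_lt_one hq0.le hq1 (hd i)
    obtain ⟨hs, hh⟩ := pi_prod_hasSum r (fun i m => (-(q ^ d i)) ^ m)
      (fun i => (geom_aux (hc i) (hc1 i)).1)
    refine ⟨hs, ?_⟩
    rwa [show (∏ i : Fin r, ∑' m : ℕ, (-(q ^ d i)) ^ m) = ∏ i : Fin r, (1 + q ^ d i)⁻¹
      from Finset.prod_congr rfl fun i _ => (geom_aux (hc i) (hc1 i)).2] at hh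
  have hnormprod : ∀ (d : Fin r → ℝ) (m : Fin r → ℕ),
      ‖∏ i : Fin r, (-(q ^ d i)) ^ (m i)‖ = q ^ (∑ i : Fin r, d i * (m i : ℝ)) := by
    intro d m
    rw [rpow_sum_aux hq0, norm_prod]
    refine Finset.prod_congr rfl fun i _ => ?_
    rw [norm_pow, norm_neg, Real.norm_eq_abs, abs_of_pos (Real.rpow_pos_of_pos hq0 _),
      Real.rpow_mul hq0.le, Real.rpow_natCast]
  constructor
  · intro s
    set t : ℝ := (-s).re with ht
    set C : ℝ := max (qnum q x ^ t) ((1 - q)⁻¹ ^ t) with hC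
    have hqn : ∀ m : Fin r → ℕ, qnum q (x + ∑ i : Fin r, w i * (m i : ℝ)) ^ t ≤ C := by
      intro m
      obtain ⟨hl, hu⟩ := hbound _ (hy m)
      rcases le_or_gt 0 t with h | h
      · exact le_max_of_le_right (Real.rpow_le_rpow (hApos.trans_le hl).le hu h)
      · exact le_max_of_le_left (Real.rpow_le_rpow_of_nonpos hApos hl h.le)
    refine Summable.of_nonneg_of_le (fun m => norm_nonneg _) ?_
      (((hgeo a ha).1).mul_left C)
    intro m
    have hqnumpos : 0 < qnum q (x + ∑ i : Fin r, w i * (m i : ℝ)) :=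
      hApos.trans_le (hbound _ (hy m)).1
    rw [norm_mul, norm_mul, norm_pow, norm_neg, norm_one, one_pow, one_mul,
      Complex.norm_real, Real.norm_eq_abs, abs_of_pos (Real.rpow_pos_of_pos hq0 _),
      Complex.norm_cpow_eq_rpow_re_of_pos hqnumpos, hnormprod a m]
    have hqpos : (0:ℝ) < q ^ (∑ i : Fin r, a i * (m i : ℝ)) := Real.rpow_pos_of_pos hq0 _
    exact (mul_le_mul_of_nonneg_left (hqn m) hqpos.le).trans_eq (mul_comm _ _)
  · intro n
    have hnz : ((1 - q) ^ n : ℝ) ≠ 0 := pow_ne_zero _ (ne_of_gt h1q)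
    set T : (Fin r → ℕ) → ℝ := fun m =>
      (-1 : ℝ) ^ (∑ i : Fin r, m i) * q ^ (∑ i : Fin r, a i * (m i : ℝ)) *
        qnum q (x + ∑ i : Fin r, w i * (m i : ℝ)) ^ n with hT
    have hcast : (fun m : Fin r → ℕ =>
        (-1 : ℂ) ^ (∑ i, m i) * ((q ^ (∑ i, a i * m i) : ℝ) : ℂ) *
          ((qnum q (x + ∑ i, w i * m i) : ℝ) : ℂ) ^ (-(-(n : ℂ)))) =
        fun m : Fin r → ℕ => ((T m : ℝ) : ℂ) := by
      funext m
      rw [neg_neg, Complex.cpow_natCast, hT]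
      push_cast
      ring
    rw [hcast, ← Complex.ofReal_tsum,
      show ((2:ℂ) ^ r) = (((2:ℝ) ^ r : ℝ) : ℂ) from by push_cast; ring,
      ← Complex.ofReal_mul]
    congr 1
    have hdpos : ∀ (l : ℕ) (i : Fin r), 0 < (l : ℝ) * w i + a i := by
      intro l i
      have h1 : (0:ℝ) ≤ (l : ℝ) * w i := mul_nonneg (Nat.cast_nonneg _) (hw i).le
      linarith [ha i]
    have hkey : ∀ (l : ℕ) (m : Fin r → ℕ),
        (-1:ℝ) ^ (∑ i : Fin r, m i) * q ^ (∑ i : Fin r, a i * (m i : ℝ)) *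
          (q ^ (x + ∑ i : Fin r, w i * (m i : ℝ))) ^ l
          = q ^ ((l:ℝ) * x) * ∏ i : Fin r, (-(q ^ ((l:ℝ) * w i + a i))) ^ (m i) := by
      intro l m
      rw [← Real.rpow_natCast (q ^ (x + ∑ i : Fin r, w i * (m i : ℝ))) l,
        ← Real.rpow_mul hq0.le,
        show (x + ∑ i : Fin r, w i * (m i : ℝ)) * (l:ℝ)
            = (l:ℝ) * x + ∑ i : Fin r, ((l:ℝ) * w i) * (m i : ℝ) from by
          rw [add_mul, Finset.sum_mul]
          congr 1
          · ring
          · exact Finset.sum_congr rfl fun i _ => by ring,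
        Real.rpow_add hq0,
        ← sign_rpow_prod hq0 (fun i => (l:ℝ) * w i + a i) m,
        show (∑ i : Fin r, ((l:ℝ) * w i + a i) * (m i : ℝ))
            = (∑ i : Fin r, a i * (m i : ℝ)) + ∑ i : Fin r, ((l:ℝ) * w i) * (m i : ℝ) from by
          rw [← Finset.sum_add_distrib]
          exact Finset.sum_congr rfl fun i _ => by ring,
        Real.rpow_add hq0]
      ring
    have hTm : ∀ m : Fin r → ℕ, T m = ∑ l ∈ range (n+1),
        ((n.choose l : ℝ) * (-1)^l / (1-q)^n * q ^ ((l:ℝ) * x)) *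
          ∏ i : Fin r, (-(q ^ ((l:ℝ) * w i + a i))) ^ (m i) := by
      intro m
      have hbinom : (1 - q ^ (x + ∑ i : Fin r, w i * (m i : ℝ))) ^ n
          = ∑ l ∈ range (n+1), (n.choose l : ℝ) * (-1)^l *
            (q ^ (x + ∑ i : Fin r, w i * (m i : ℝ))) ^ l := by
        rw [sub_eq_add_neg, add_comm, add_pow]
        refine Finset.sum_congr rfl fun l _ => ?_
        rw [one_pow, neg_pow]
        ring
      rw [hT]
      simp only [qnum, div_pow, hbinom, Finset.sum_div, Finset.mul_sum]
      refine Finset.sum_congr rfl fun l _ => ?_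
      have h := hkey l m
      field_simp
      rw [mul_comm x (l:ℝ)]
      linear_combination (n.choose l : ℝ) * h
    have hsuml : ∀ l ∈ range (n+1), Summable (fun m : Fin r → ℕ =>
        ((n.choose l : ℝ) * (-1)^l / (1-q)^n * q ^ ((l:ℝ) * x)) *
          ∏ i : Fin r, (-(q ^ ((l:ℝ) * w i + a i))) ^ (m i)) :=
      fun l _ => ((hgeo (fun i => (l:ℝ) * w i + a i) (hdpos l)).2.summable).mul_left _
    rw [tsum_congr hTm, Summable.tsum_finsetSum hsuml]
    have htsum_l : ∀ l : ℕ, (∑' m : Fin r → ℕ,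
        ((n.choose l : ℝ) * (-1)^l / (1-q)^n * q ^ ((l:ℝ) * x)) *
          ∏ i : Fin r, (-(q ^ ((l:ℝ) * w i + a i))) ^ (m i))
        = ((n.choose l : ℝ) * (-1)^l / (1-q)^n * q ^ ((l:ℝ) * x)) *
          ∏ i : Fin r, (1 + q ^ ((l:ℝ) * w i + a i))⁻¹ := by
      intro l
      rw [tsum_mul_left, (hgeo (fun i => (l:ℝ) * w i + a i) (hdpos l)).2.tsum_eq]
    rw [Finset.sum_congr rfl (fun l _ => htsum_l l), Finset.mul_sum, div_mul_eq_mul_div,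
      Finset.mul_sum, Finset.sum_div]
    refine Finset.sum_congr rfl fun l _ => ?_
    have hppos : (0:ℝ) < ∏ j : Fin r, (1 + q ^ ((l:ℝ) * w j + a j)) :=
      Finset.prod_pos fun j _ => by positivity
    rw [Finset.prod_inv_distrib]
    have hpne : (∏ j : Fin r, (1 + q ^ ((l:ℝ) * w j + a j))) ≠ 0 := ne_of_gt hppos
    field_simp
end
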